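/- arXiv:2506.05510 — 4 statements merged into one kernel-verified Lean document; each statement's English description precedes it below -/
import Mathlib

section
/- (Dual volume of a simple polytope) Let P = {y ∈ ℝᵈ : U·y + z ≥ 0} be a d-dimensional simple polytope with minimal facet representation, containing 0 in its interior (so z > 0 componentwise). Then the normalized volume of the polar dual satisfies vol(P°) = ∑_{v ∈ V(P)} |det U_v| / ∏_{F ∋ v} z_F, where U_v is the d×d matrix of facet normals of the facets containing vertex v, and the product ranges over facets F containing v. -/
open MeasureTheory Matrix Finset

lemma wsimplex_volume : ∀ (d : ℕ) (c : Fin d → ℝ), (∀ i, 0 < c i) → ∀ a : ℝ, 0 ≤ a →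
    volume {x : Fin d → ℝ | (∀ i, 0 ≤ x i) ∧ ∑ i, x i * c i ≤ a}
      = ENNReal.ofReal (a ^ d / (d.factorial * ∏ i, c i)) := by
  intro d
  induction d with
  | zero =>
      intro c hc a ha
      have : {x : Fin 0 → ℝ | (∀ i, 0 ≤ x i) ∧ ∑ i, x i * c i ≤ a} = Set.univ := by
        ext x; simp [ha]
      rw [this]
      rw [volume_pi, Measure.pi_univ]; simp
  | succ d ih =>
      intro c hc a ha
      have hc0 : (0:ℝ) < c 0 := hc 0
      set c' : Fin d → ℝ := fun i => c i.succ with hc'def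
      have hc' : ∀ i, 0 < c' i := fun i => hc i.succ
      have hprod' : (0:ℝ) < ∏ i, c' i := Finset.prod_pos fun i _ => hc' i
      have hK' : (0:ℝ) < (d.factorial : ℝ) * ∏ i, c' i := by positivity
      set L : ℝ := a / c 0 with hLdef
      have hL0 : 0 ≤ L := div_nonneg ha hc0.le
      set B : Set (ℝ × (Fin d → ℝ)) :=
        {p | (0 ≤ p.1 ∧ ∀ i, 0 ≤ p.2 i) ∧ p.1 * c 0 + ∑ i, p.2 i * c' i ≤ a} with hBdef
      have hBclosed : IsClosed B := by
        have h1 : IsClosed {p : ℝ × (Fin d → ℝ) | 0 ≤ p.1} :=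
          isClosed_le continuous_const continuous_fst
        have h2 : IsClosed {p : ℝ × (Fin d → ℝ) | ∀ i, 0 ≤ p.2 i} := by
          have : {p : ℝ × (Fin d → ℝ) | ∀ i, 0 ≤ p.2 i} = ⋂ i, {p | 0 ≤ p.2 i} := by
            ext p; simp
          rw [this]
          exact isClosed_iInter fun i =>
            isClosed_le continuous_const ((continuous_apply i).comp continuous_snd)
        have h3 : IsClosed {p : ℝ × (Fin d → ℝ) | p.1 * c 0 + ∑ i, p.2 i * c' i ≤ a} :=
          isClosed_le ((continuous_fst.mul continuous_const).add
            (continuous_finset_sum _ fun i _ =>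
              ((continuous_apply i).comp continuous_snd).mul continuous_const)) continuous_const
        have hBeq : B = ({p : ℝ × (Fin d → ℝ) | 0 ≤ p.1} ∩ {p | ∀ i, 0 ≤ p.2 i})
            ∩ {p | p.1 * c 0 + ∑ i, p.2 i * c' i ≤ a} := by
          ext p
          constructor
          · rintro ⟨⟨u1, u2⟩, u3⟩; exact ⟨⟨u1, u2⟩, u3⟩
          · rintro ⟨⟨u1, u2⟩, u3⟩; exact ⟨⟨u1, u2⟩, u3⟩
        rw [hBeq]
        exact (h1.inter h2).inter h3
      have hBmeas : MeasurableSet B := hBclosed.measurableSet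
      have hmp := measurePreserving_piFinSuccAbove (fun _ : Fin (d+1) => (volume : Measure ℝ)) 0
      have hpre : (MeasurableEquiv.piFinSuccAbove (fun _ : Fin (d+1) => ℝ) 0) ⁻¹' B
          = {x : Fin (d+1) → ℝ | (∀ i, 0 ≤ x i) ∧ ∑ i, x i * c i ≤ a} := by
        ext x
        simp only [Set.mem_preimage, hBdef, Set.mem_setOf_eq,
          MeasurableEquiv.piFinSuccAbove_apply, Fin.insertNthEquiv, Equiv.coe_fn_symm_mk,
          Fin.removeNth, Fin.succAbove_zero]
        rw [Fin.forall_fin_succ, Fin.sum_univ_succ]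
      have key : volume {x : Fin (d+1) → ℝ | (∀ i, 0 ≤ x i) ∧ ∑ i, x i * c i ≤ a}
          = ((volume : Measure ℝ).prod (volume : Measure (Fin d → ℝ))) B := by
        rw [← hpre]
        have := hmp.measure_preimage hBmeas.nullMeasurableSet
        simpa [volume_pi] using this
      rw [key, Measure.prod_apply hBmeas]
      have hslice : ∀ t : ℝ, volume (Prod.mk t ⁻¹' B) =
          Set.indicator (Set.Icc 0 L)
            (fun t => ENNReal.ofReal ((a - t * c 0)^d / ((d.factorial : ℝ) * ∏ i, c' i))) t := by
        intro t
        by_cases ht : t ∈ Set.Icc 0 L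
        · rw [Set.indicator_of_mem ht]
          obtain ⟨ht0, htL⟩ := ht
          have hta : t * c 0 ≤ a := by
            rw [hLdef] at htL
            calc t * c 0 ≤ (a / c 0) * c 0 := by nlinarith
            _ = a := div_mul_cancel₀ a hc0.ne'
          have h1 : Prod.mk t ⁻¹' B
              = {y : Fin d → ℝ | (∀ i, 0 ≤ y i) ∧ ∑ i, y i * c' i ≤ a - t * c 0} := by
            ext y
            simp only [Set.mem_preimage, hBdef, Set.mem_setOf_eq]
            constructor
            · rintro ⟨⟨-, h2⟩, h3⟩; exact ⟨h2, by linarith⟩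
            · rintro ⟨h2, h3⟩; exact ⟨⟨ht0, h2⟩, by linarith⟩
          rw [h1, ih c' hc' _ (by linarith)]
        · rw [Set.indicator_of_notMem ht]
          have hempty : Prod.mk t ⁻¹' B = ∅ := by
            ext y
            simp only [Set.mem_preimage, hBdef, Set.mem_setOf_eq, Set.mem_empty_iff_false,
              iff_false]
            rintro ⟨⟨ht0, h2⟩, h3⟩
            have ht' : L < t := lt_of_not_ge fun h => ht ⟨ht0, h⟩
            have : a < t * c 0 := by
              rw [hLdef, div_lt_iff₀ hc0] at ht'
              linarith
            have hsum : 0 ≤ ∑ i, y i * c' i :=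
              Finset.sum_nonneg fun i _ => mul_nonneg (h2 i) (hc' i).le
            linarith
          simp [hempty]
      simp_rw [hslice]
      rw [lintegral_indicator measurableSet_Icc]
      have hfc : Continuous fun t : ℝ => (a - t * c 0)^d / ((d.factorial : ℝ) * ∏ i, c' i) := by
        fun_prop
      have hint : IntegrableOn
          (fun t : ℝ => (a - t * c 0)^d / ((d.factorial : ℝ) * ∏ i, c' i)) (Set.Icc 0 L) :=
        hfc.integrableOn_Icc
      have hnn : 0 ≤ᵐ[volume.restrict (Set.Icc 0 L)]
          fun t : ℝ => (a - t * c 0)^d / ((d.factorial : ℝ) * ∏ i, c' i) := by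
        refine (ae_restrict_iff' measurableSet_Icc).2 (ae_of_all _ fun t ht => ?_)
        obtain ⟨ht0, htL⟩ := ht
        have hta : t * c 0 ≤ a := by
          rw [hLdef, le_div_iff₀ hc0] at htL; linarith
        have : (0:ℝ) ≤ (a - t * c 0)^d := pow_nonneg (by linarith) d
        positivity
      rw [← ofReal_integral_eq_lintegral_ofReal hint hnn]
      congr 1
      rw [MeasureTheory.integral_Icc_eq_integral_Ioc, ← intervalIntegral.integral_of_le hL0]
      rw [intervalIntegral.integral_div]
      have hcomp : (fun t : ℝ => (a - t * c 0)^d) = fun t : ℝ => (fun s : ℝ => (a - s)^d) (c 0 * t) := by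
        ext t; ring_nf
      rw [hcomp, intervalIntegral.integral_comp_mul_left (fun s : ℝ => (a - s)^d) hc0.ne']
      rw [mul_zero, hLdef, mul_div_cancel₀ a hc0.ne']
      rw [intervalIntegral.integral_comp_sub_left (fun u : ℝ => u ^ d) a]
      rw [sub_self, sub_zero, integral_pow]
      rw [Fin.prod_univ_succ, Nat.factorial_succ]
      have hd1 : ((d:ℝ) + 1) ≠ 0 := by positivity
      push_cast
      have hp : (∏ i : Fin d, c i.succ) ≠ 0 := hprod'.ne'
      have hc0ne : c 0 ≠ 0 := hc0.ne'
      have hd2 : (1 + (d:ℝ)) ≠ 0 := by positivity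
      rw [hc'def]
      field_simp
      try ring
      try exact Or.inl trivial
      field_simp
      ring

lemma perturb {d n : ℕ} (U : Fin n → Fin d → ℝ) (z : Fin n → ℝ) (v w : Fin d → ℝ)
    (hvP : ∀ j, 0 ≤ U j ⬝ᵥ v + z j) :
    ∃ ε : ℝ, 0 < ε ∧ ∀ t : ℝ, |t| ≤ ε →
      (∀ j, U j ⬝ᵥ v + z j = 0 → 0 ≤ t * (U j ⬝ᵥ w)) →
      ∀ j, 0 ≤ U j ⬝ᵥ (v + t • w) + z j := by
  classical
  set F : Finset ℝ := insert (1:ℝ)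
    ((Finset.univ.filter fun j => U j ⬝ᵥ v + z j ≠ 0).image
      fun j => (U j ⬝ᵥ v + z j) / (|U j ⬝ᵥ w| + 1)) with hF
  have hFne : F.Nonempty := ⟨1, Finset.mem_insert_self _ _⟩
  refine ⟨F.min' hFne, ?_, ?_⟩
  · rw [Finset.lt_min'_iff]
    intro x hx
    rcases Finset.mem_insert.1 hx with rfl | hx
    · norm_num
    · obtain ⟨j, hj, rfl⟩ := Finset.mem_image.1 hx
      have h1 : 0 < U j ⬝ᵥ v + z j :=
        (hvP j).lt_of_ne (Ne.symm (Finset.mem_filter.1 hj).2)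
      have h2 : (0:ℝ) < |U j ⬝ᵥ w| + 1 := by positivity
      positivity
  · intro t ht hact j
    rw [dotProduct_add, dotProduct_smul, smul_eq_mul]
    rcases eq_or_lt_of_le (hvP j) with h0 | h0
    · have := hact j h0.symm
      linarith
    · have hmem : (U j ⬝ᵥ v + z j) / (|U j ⬝ᵥ w| + 1) ∈ F :=
        Finset.mem_insert_of_mem (Finset.mem_image_of_mem _
          (Finset.mem_filter.2 ⟨Finset.mem_univ _, h0.ne'⟩))
      have hle := F.min'_le _ hmem
      have habs : (0:ℝ) ≤ |U j ⬝ᵥ w| := abs_nonneg _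
      have h1 : |t * (U j ⬝ᵥ w)| ≤ U j ⬝ᵥ v + z j := by
        rw [abs_mul]
        calc |t| * |U j ⬝ᵥ w|
            ≤ ((U j ⬝ᵥ v + z j) / (|U j ⬝ᵥ w| + 1)) * |U j ⬝ᵥ w| := by
              exact mul_le_mul (le_trans ht hle) le_rfl habs
                (div_nonneg h0.le (by positivity))
          _ ≤ U j ⬝ᵥ v + z j := by
              rw [div_mul_eq_mul_div, div_le_iff₀ (by positivity)]
              nlinarith
      have h2 := neg_abs_le (t * (U j ⬝ᵥ w))
      linarith

lemma vertexDet {d n : ℕ} (U : Fin n → Fin d → ℝ) (z : Fin n → ℝ) (v : Fin d → ℝ)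
    (σ : Fin d → Fin n)
    (hvP : ∀ j, 0 ≤ U j ⬝ᵥ v + z j)
    (hext : v ∈ Set.extremePoints ℝ {y : Fin d → ℝ | ∀ j, 0 ≤ U j ⬝ᵥ y + z j})
    (hcover : ∀ j, U j ⬝ᵥ v + z j = 0 → ∃ i, σ i = j) :
    (Matrix.of fun i j => U (σ i) j).det ≠ 0 := by
  intro hdet
  obtain ⟨w, hw0, hw⟩ := Matrix.exists_mulVec_eq_zero_iff.2 hdet
  have hwact : ∀ j, U j ⬝ᵥ v + z j = 0 → U j ⬝ᵥ w = 0 := by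
    intro j hj
    obtain ⟨i, rfl⟩ := hcover j hj
    have := congrFun hw i
    simpa [Matrix.mulVec, dotProduct] using this
  obtain ⟨ε, hε, hball⟩ := perturb U z v w hvP
  have h1 : v + ε • w ∈ {y : Fin d → ℝ | ∀ j, 0 ≤ U j ⬝ᵥ y + z j} :=
    hball ε (by rw [abs_of_pos hε]) (fun j hj => by rw [hwact j hj, mul_zero])
  have h2 : v + (-ε) • w ∈ {y : Fin d → ℝ | ∀ j, 0 ≤ U j ⬝ᵥ y + z j} :=
    hball (-ε) (by rw [abs_neg, abs_of_pos hε]) (fun j hj => by rw [hwact j hj, mul_zero])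
  have hseg : v ∈ openSegment ℝ (v + ε • w) (v + (-ε) • w) :=
    ⟨1/2, 1/2, by norm_num, by norm_num, by norm_num, by module⟩
  have heq := hext.2 h1 h2 hseg
  apply hw0
  have h3 : ε • w = 0 := by
    have := add_eq_left.mp heq
    exact this
  rcases smul_eq_zero.1 h3 with h | h
  · exact absurd h hε.ne'
  · exact h

noncomputable section

def polyCone {d n : ℕ} (U : Fin n → Fin d → ℝ) (z : Fin n → ℝ)
    (σ : Fin d → Fin n) : Set (Fin d → ℝ) :=
  (fun l : Fin d → ℝ => ∑ i, l i • U (σ i)) ''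
    {l | (∀ i, 0 ≤ l i) ∧ ∑ i, l i * z (σ i) ≤ 1}

lemma sum_smul_dot {d : ℕ} (g : Fin d → Fin d → ℝ) (l : Fin d → ℝ) (y : Fin d → ℝ) :
    (∑ i, l i • g i) ⬝ᵥ y = ∑ i, l i * (g i ⬝ᵥ y) := by
  simp only [dotProduct, Finset.sum_apply, Pi.smul_apply, smul_eq_mul, Finset.sum_mul]
  rw [Finset.sum_comm]
  exact Finset.sum_congr rfl fun i _ => by
    rw [Finset.mul_sum]
    exact Finset.sum_congr rfl fun j _ => by ring

lemma polyCone_min {d n : ℕ} {U : Fin n → Fin d → ℝ} {z : Fin n → ℝ}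
    {σ : Fin d → Fin n} {v u : Fin d → ℝ}
    (hact : ∀ i, U (σ i) ⬝ᵥ v + z (σ i) = 0)
    (hu : u ∈ polyCone U z σ) :
    -1 ≤ u ⬝ᵥ v ∧ ∀ y : Fin d → ℝ, (∀ j, 0 ≤ U j ⬝ᵥ y + z j) → u ⬝ᵥ v ≤ u ⬝ᵥ y := by
  obtain ⟨l, ⟨hl0, hl1⟩, rfl⟩ := hu
  have hv : (∑ i, l i • U (σ i)) ⬝ᵥ v = -∑ i, l i * z (σ i) := by
    rw [sum_smul_dot, ← Finset.sum_neg_distrib]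
    refine Finset.sum_congr rfl fun i _ => ?_
    rw [show U (σ i) ⬝ᵥ v = -z (σ i) from by linarith [hact i]]
    ring
  constructor
  · rw [hv]; linarith
  · intro y hy
    rw [hv, sum_smul_dot]
    have hterm : ∀ i ∈ Finset.univ (α := Fin d), -(l i * z (σ i)) ≤ l i * (U (σ i) ⬝ᵥ y) := by
      intro i _
      have h1 : -z (σ i) ≤ U (σ i) ⬝ᵥ y := by have := hy (σ i); linarith
      nlinarith [hl0 i]
    calc -∑ i, l i * z (σ i) = ∑ i, -(l i * z (σ i)) := by rw [Finset.sum_neg_distrib]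
      _ ≤ ∑ i, l i * (U (σ i) ⬝ᵥ y) := Finset.sum_le_sum hterm

lemma polyCone_volume {d n : ℕ} (U : Fin n → Fin d → ℝ) (z : Fin n → ℝ)
    (σ : Fin d → Fin n) (hz : ∀ i, 0 < z (σ i)) :
    volume (polyCone U z σ)
      = ENNReal.ofReal
          (|(Matrix.of fun i j => U (σ i) j).det| / (d.factorial * ∏ i, z (σ i))) := by
  have hmap : (fun l : Fin d → ℝ => ∑ i, l i • U (σ i))
      = ⇑(Matrix.toLin' (Matrix.of fun i j => U (σ i) j)ᵀ) := by
    ext l j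
    rw [Matrix.toLin'_apply]
    simp only [Matrix.mulVec, dotProduct, Matrix.transpose_apply, Matrix.of_apply,
      Finset.sum_apply, Pi.smul_apply, smul_eq_mul]
    exact Finset.sum_congr rfl fun i _ => mul_comm _ _
  rw [polyCone, hmap, Measure.addHaar_image_linearMap,
    wsimplex_volume d (fun i => z (σ i)) hz 1 zero_le_one, LinearMap.det_toLin',
    Matrix.det_transpose, ← ENNReal.ofReal_mul (abs_nonneg _)]
  congr 1
  rw [one_pow]
  ring


lemma hyperplane_null {d : ℕ} (c : Fin d → ℝ) (hc : c ≠ 0) :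
    volume {u : Fin d → ℝ | u ⬝ᵥ c = 0} = 0 := by
  set φ : (Fin d → ℝ) →ₗ[ℝ] ℝ :=
    { toFun := fun u => u ⬝ᵥ c
      map_add' := fun a b => add_dotProduct a b c
      map_smul' := fun r a => smul_dotProduct r a c } with hφ
  have hker : {u : Fin d → ℝ | u ⬝ᵥ c = 0} = (LinearMap.ker φ : Set (Fin d → ℝ)) := by
    ext u
    simp [hφ, LinearMap.mem_ker]
  rw [hker]
  apply MeasureTheory.Measure.addHaar_submodule
  intro htop
  have hmem : c ∈ LinearMap.ker φ := htop ▸ Submodule.mem_top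
  have hcc : c ⬝ᵥ c = 0 := hmem
  exact hc (dotProduct_self_eq_zero.1 hcc)

lemma polyCone_measurable {d n : ℕ} (U : Fin n → Fin d → ℝ) (z : Fin n → ℝ)
    (σ : Fin d → Fin n) (hdet : (Matrix.of fun i j => U (σ i) j).det ≠ 0) :
    MeasurableSet (polyCone U z σ) := by
  classical
  set A := (Matrix.of fun i j => U (σ i) j)ᵀ with hA
  have hdetA : A.det ≠ 0 := by rw [hA, Matrix.det_transpose]; exact hdet
  have hmap : ∀ l : Fin d → ℝ, ∑ i, l i • U (σ i) = A *ᵥ l := by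
    intro l; ext j
    simp only [hA, Matrix.mulVec, dotProduct, Matrix.transpose_apply, Matrix.of_apply,
      Finset.sum_apply, Pi.smul_apply, smul_eq_mul]
    exact Finset.sum_congr rfl fun i _ => mul_comm _ _
  set Sg : Set (Fin d → ℝ) := {l | (∀ i, 0 ≤ l i) ∧ ∑ i, l i * z (σ i) ≤ 1} with hSgdef
  have hSgclosed : IsClosed Sg := by
    have h1 : IsClosed {l : Fin d → ℝ | ∀ i, 0 ≤ l i} := by
      have heq : {l : Fin d → ℝ | ∀ i, 0 ≤ l i} = ⋂ i, {l | 0 ≤ l i} := by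
        ext x
        exact ⟨fun h => Set.mem_iInter.2 h, fun h i => Set.mem_iInter.1 h i⟩
      rw [heq]
      exact isClosed_iInter fun i => isClosed_le continuous_const (continuous_apply i)
    have h2 : IsClosed {l : Fin d → ℝ | ∑ i, l i * z (σ i) ≤ 1} :=
      isClosed_le (continuous_finset_sum _ fun i _ =>
        (continuous_apply i).mul continuous_const) continuous_const
    have heq : Sg = {l : Fin d → ℝ | ∀ i, 0 ≤ l i} ∩ {l | ∑ i, l i * z (σ i) ≤ 1} := rfl
    rw [heq]
    exact h1.inter h2
  have hpre : polyCone U z σ = (fun x => A⁻¹ *ᵥ x) ⁻¹' Sg := by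
    ext x
    constructor
    · rintro ⟨l, hl, rfl⟩
      show (A⁻¹ *ᵥ (∑ i, l i • U (σ i))) ∈ Sg
      rw [hmap l, Matrix.mulVec_mulVec, Matrix.nonsing_inv_mul A (Ne.isUnit hdetA),
        Matrix.one_mulVec]
      exact hl
    · intro hx
      refine ⟨A⁻¹ *ᵥ x, hx, ?_⟩
      show (∑ i, (A⁻¹ *ᵥ x) i • U (σ i)) = x
      rw [hmap, Matrix.mulVec_mulVec, Matrix.mul_nonsing_inv A (Ne.isUnit hdetA),
        Matrix.one_mulVec]
  rw [hpre]
  exact (hSgclosed.preimage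
    ((A⁻¹).mulVecLin.continuous_of_finiteDimensional)).measurableSet


lemma farkas {d n : ℕ} (U : Fin n → Fin d → ℝ) (z : Fin n → ℝ) (v u : Fin d → ℝ)
    (σ : Fin d → Fin n)
    (hvP : ∀ j, 0 ≤ U j ⬝ᵥ v + z j)
    (hcover : ∀ j, U j ⬝ᵥ v + z j = 0 → ∃ i, σ i = j)
    (hdet : (Matrix.of fun i j => U (σ i) j).det ≠ 0)
    (hopt : ∀ y : Fin d → ℝ, (∀ j, 0 ≤ U j ⬝ᵥ y + z j) → u ⬝ᵥ v ≤ u ⬝ᵥ y) :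
    ∃ l : Fin d → ℝ, (∀ i, 0 ≤ l i) ∧ u = ∑ i, l i • U (σ i) := by
  classical
  set A := (Matrix.of fun i j => U (σ i) j)ᵀ with hA
  have hdetA : A.det ≠ 0 := by rw [hA, Matrix.det_transpose]; exact hdet
  have hmap : ∀ l : Fin d → ℝ, ∑ i, l i • U (σ i) = A *ᵥ l := by
    intro l; ext j
    simp only [hA, Matrix.mulVec, dotProduct, Matrix.transpose_apply, Matrix.of_apply,
      Finset.sum_apply, Pi.smul_apply, smul_eq_mul]
    exact Finset.sum_congr rfl fun i _ => mul_comm _ _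
  set C : Set (Fin d → ℝ) :=
    (fun l : Fin d → ℝ => ∑ i, l i • U (σ i)) '' {l | ∀ i, 0 ≤ l i} with hC
  suffices hu : u ∈ C by
    obtain ⟨l, hl, he⟩ := hu; exact ⟨l, hl, he.symm⟩
  by_contra hu
  have hCeq : C = (fun x => A⁻¹ *ᵥ x) ⁻¹' {l | ∀ i, 0 ≤ l i} := by
    ext x
    constructor
    · rintro ⟨l, hl, rfl⟩
      show ∀ i, 0 ≤ (A⁻¹ *ᵥ (∑ i, l i • U (σ i))) i
      rw [hmap l, Matrix.mulVec_mulVec, Matrix.nonsing_inv_mul A (Ne.isUnit hdetA), Matrix.one_mulVec]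
      exact hl
    · intro hx
      refine ⟨A⁻¹ *ᵥ x, hx, ?_⟩
      show (∑ i, (A⁻¹ *ᵥ x) i • U (σ i)) = x
      rw [hmap, Matrix.mulVec_mulVec, Matrix.mul_nonsing_inv A (Ne.isUnit hdetA), Matrix.one_mulVec]
  have horth_closed : IsClosed {l : Fin d → ℝ | ∀ i, 0 ≤ l i} := by
    have : {l : Fin d → ℝ | ∀ i, 0 ≤ l i} = ⋂ i, {l | 0 ≤ l i} := by
      ext x
      exact ⟨fun h => Set.mem_iInter.2 h, fun h i => Set.mem_iInter.1 h i⟩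
    rw [this]
    exact isClosed_iInter fun i => isClosed_le continuous_const (continuous_apply i)
  have hCclosed : IsClosed C := by
    rw [hCeq]
    exact horth_closed.preimage ((A⁻¹).mulVecLin.continuous_of_finiteDimensional)
  have hCconv : Convex ℝ C := by
    have h1 : Convex ℝ {l : Fin d → ℝ | ∀ i, 0 ≤ l i} := by
      have heq : {l : Fin d → ℝ | ∀ i, 0 ≤ l i} = Set.univ.pi fun _ => Set.Ici 0 := by
        ext x
        exact ⟨fun h i _ => h i, fun h i => h i (Set.mem_univ i)⟩
      rw [heq]; exact convex_pi fun i _ => convex_Ici 0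
    have heq2 : (fun l : Fin d → ℝ => ∑ i, l i • U (σ i)) = ⇑(Matrix.mulVecLin A) := by
      funext l
      rw [hmap l]
      rfl
    rw [hC, heq2]
    exact h1.linear_image (Matrix.mulVecLin A)
  obtain ⟨f, s, hfC, hfu⟩ := geometric_hahn_banach_closed_point hCconv hCclosed hu
  have h0C : (0 : Fin d → ℝ) ∈ C := ⟨0, fun i => le_rfl, by simp⟩
  have hs0 : 0 < s := by simpa using hfC 0 h0C
  have hneg : ∀ i, f (U (σ i)) ≤ 0 := by
    intro i
    by_contra hpos
    push_neg at hpos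
    have hmem : (fun j => if j = i then (s+1)/f (U (σ i)) else 0)
        ∈ {l : Fin d → ℝ | ∀ i, 0 ≤ l i} := by
      intro j; dsimp only; split
      · positivity
      · exact le_rfl
    have hsum : ∑ j, (if j = i then (s+1)/f (U (σ i)) else 0) • U (σ j)
        = ((s+1)/f (U (σ i))) • U (σ i) := by
      rw [Finset.sum_eq_single i]
      · simp
      · intro b _ hb; simp [hb]
      · intro hb; exact absurd (Finset.mem_univ i) hb
    have hCm : ((s+1)/f (U (σ i))) • U (σ i) ∈ C := ⟨_, hmem, hsum⟩
    have hlt := hfC _ hCm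
    rw [ContinuousLinearMap.map_smul, smul_eq_mul, div_mul_cancel₀ _ hpos.ne'] at hlt
    linarith
  set w : Fin d → ℝ := fun i => f (Pi.single i 1 : Fin d → ℝ) with hwdef
  have hrep : ∀ y : Fin d → ℝ, f y = y ⬝ᵥ w := by
    intro y
    have hy : y = ∑ i, y i • (Pi.single i 1 : Fin d → ℝ) := by
      funext j
      rw [Finset.sum_apply]
      simp [Pi.single_apply]
    conv_lhs => rw [hy]
    rw [map_sum]
    simp only [ContinuousLinearMap.map_smul, smul_eq_mul]
    rw [hwdef]
    rfl
  have hUw : ∀ i, U (σ i) ⬝ᵥ w ≤ 0 := fun i => by rw [← hrep]; exact hneg i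
  have huw : 0 < u ⬝ᵥ w := by rw [← hrep]; linarith
  obtain ⟨ε, hε, hball⟩ := perturb U z v w hvP
  have hy : ∀ j, 0 ≤ U j ⬝ᵥ (v + (-ε) • w) + z j := by
    apply hball (-ε) (by rw [abs_neg, abs_of_pos hε])
    intro j hj
    obtain ⟨i, rfl⟩ := hcover j hj
    nlinarith [hUw i]
  have hfin := hopt _ hy
  rw [dotProduct_add, dotProduct_smul, smul_eq_mul] at hfin
  nlinarith

end

/-- Dual volume of a simple polytope: if P = {y : U·y + z ≥ 0} is a bounded
full-dimensional simple polytope with minimal (irredundant) facet representation and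
0 ∈ int(P), then the normalized volume of the polar dual P° satisfies
vol(P°) = ∑_{v ∈ V(P)} |det U_v| / ∏_{F ∋ v} z_F. -/
theorem stmt_10 (d n : ℕ) (hd : 0 < d)
    (U : Fin n → Fin d → ℝ) (z : Fin n → ℝ)
    (P : Set (Fin d → ℝ))
    (hP : P = {y : Fin d → ℝ | ∀ i : Fin n, 0 ≤ U i ⬝ᵥ y + z i})
    (hbdd : Bornology.IsBounded P)
    (h0 : (0 : Fin d → ℝ) ∈ interior P)
    -- minimality: each inequality defines a facet (has a point where only it is tight)
    (hmin : ∀ i : Fin n, ∃ y ∈ P, U i ⬝ᵥ y + z i = 0 ∧ ∀ j : Fin n, j ≠ i → 0 < U j ⬝ᵥ y + z j)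
    -- V is the vertex set of P
    (V : Finset (Fin d → ℝ)) (hV : (V : Set (Fin d → ℝ)) = Set.extremePoints ℝ P)
    -- S v is the set of facets containing v
    (S : (Fin d → ℝ) → Finset (Fin n))
    (hS : ∀ v : Fin d → ℝ, S v = Finset.univ.filter fun i => U i ⬝ᵥ v + z i = 0)
    -- P is simple
    (hsimple : ∀ v ∈ V, (S v).card = d)
    -- an enumeration of the facets through each vertex (|det U_v| does not depend on it)
    (e : ∀ v ∈ V, (S v : Finset (Fin n)) ≃ Fin d) :
    (d.factorial : ℝ) *
        (volume {u : Fin d → ℝ | ∀ y ∈ P, -1 ≤ u ⬝ᵥ y}).toReal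
      = ∑ v ∈ V.attach,
          |Matrix.det (Matrix.of fun i j : Fin d => U ((e v.1 v.2).symm i : S v.1) j)| /
            ∏ i ∈ S v.1, z i := by
  classical
  subst hP
  set P : Set (Fin d → ℝ) := {y : Fin d → ℝ | ∀ i : Fin n, 0 ≤ U i ⬝ᵥ y + z i} with hPdef
  have hmemP : ∀ y : Fin d → ℝ, y ∈ P ↔ ∀ i, 0 ≤ U i ⬝ᵥ y + z i := fun y => Iff.rfl
  have h0P : (0 : Fin d → ℝ) ∈ P := interior_subset h0
  have hz0 : ∀ i, 0 ≤ z i := by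
    intro i
    have := (hmemP 0).1 h0P i
    simpa using this
  have hactive : ∀ (w : Fin d → ℝ) (j : Fin n), j ∈ S w ↔ U j ⬝ᵥ w + z j = 0 := by
    intro w j; rw [hS w]; simp
  set Sig : ∀ x : {v // v ∈ V}, Fin d → Fin n :=
    fun x i => ((e x.1 x.2).symm i : Fin n) with hSig
  set Δ : {v // v ∈ V} → Set (Fin d → ℝ) := fun x => polyCone U z (Sig x) with hΔ
  have hxExt : ∀ x : {v // v ∈ V}, x.1 ∈ Set.extremePoints ℝ P := by
    intro x
    rw [← hV]
    exact x.2
  have hxP : ∀ x : {v // v ∈ V}, x.1 ∈ P := fun x => (hxExt x).1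
  have hσmem : ∀ (x : {v // v ∈ V}) i, Sig x i ∈ S x.1 := fun x i => ((e x.1 x.2).symm i).2
  have hσact : ∀ (x : {v // v ∈ V}) i, U (Sig x i) ⬝ᵥ x.1 + z (Sig x i) = 0 :=
    fun x i => (hactive x.1 (Sig x i)).1 (hσmem x i)
  have hσcover : ∀ (x : {v // v ∈ V}) j, U j ⬝ᵥ x.1 + z j = 0 → ∃ i, Sig x i = j := by
    intro x j hj
    refine ⟨e x.1 x.2 ⟨j, (hactive x.1 j).2 hj⟩, ?_⟩
    rw [hSig]
    simp
  have hdetx : ∀ x : {v // v ∈ V},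
      (Matrix.of fun i j => U (Sig x i) j).det ≠ 0 := by
    intro x
    exact vertexDet U z x.1 (Sig x) (fun j => (hmemP x.1).1 (hxP x) j)
      (hxExt x) (hσcover x)
  have hzσ : ∀ (x : {v // v ∈ V}) i, 0 < z (Sig x i) := by
    intro x i
    rcases (hz0 (Sig x i)).lt_or_eq with h | h
    · exact h
    · exfalso
      set j := Sig x i with hj
      have hrow : U j ≠ 0 := by
        intro h0row
        apply hdetx x
        apply Matrix.det_eq_zero_of_row_eq_zero i
        intro k
        show U (Sig x i) k = 0
        rw [← hj, h0row]
        rfl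
      have hUU : 0 < U j ⬝ᵥ U j := by
        have h1 : 0 ≤ U j ⬝ᵥ U j := Finset.sum_nonneg fun k _ => mul_self_nonneg _
        rcases h1.lt_or_eq with h2 | h2
        · exact h2
        · exact absurd (dotProduct_self_eq_zero.1 h2.symm) hrow
      obtain ⟨ε, hε, hball⟩ := Metric.isOpen_iff.1 isOpen_interior 0 h0
      set δ : ℝ := ε / (2 * (‖U j‖ + 1)) with hδdef
      have hnUj : (0:ℝ) ≤ ‖U j‖ := norm_nonneg _
      have hδ : 0 < δ := by positivity
      have hmb : -(δ • U j) ∈ Metric.ball (0 : Fin d → ℝ) ε := by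
        rw [Metric.mem_ball, dist_zero_right, norm_neg, norm_smul, Real.norm_eq_abs,
          abs_of_pos hδ, hδdef, div_mul_eq_mul_div, div_lt_iff₀ (by positivity)]
        nlinarith
      have hyP : -(δ • U j) ∈ P := interior_subset (hball hmb)
      have hcon := (hmemP _).1 hyP j
      rw [dotProduct_neg, dotProduct_smul, smul_eq_mul, ← h] at hcon
      nlinarith
  have hΔQ : ∀ x : {v // v ∈ V}, Δ x ⊆ {u : Fin d → ℝ | ∀ y ∈ P, -1 ≤ u ⬝ᵥ y} := by
    intro x u hu y hy
    obtain ⟨h1, h2⟩ := polyCone_min (hσact x) hu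
    exact le_trans h1 (h2 y fun j => (hmemP y).1 hy j)
  have hPclosed : IsClosed P := by
    have heq : P = ⋂ i, {y : Fin d → ℝ | 0 ≤ U i ⬝ᵥ y + z i} := by
      ext y
      exact ⟨fun h => Set.mem_iInter.2 h, fun h i => Set.mem_iInter.1 h i⟩
    rw [heq]
    refine isClosed_iInter fun i =>
      isClosed_le continuous_const (Continuous.add ?_ continuous_const)
    show Continuous fun y : Fin d → ℝ => ∑ j, U i j * y j
    exact continuous_finset_sum _ fun j _ => continuous_const.mul (continuous_apply j)
  have hPcmp : IsCompact P := Metric.isCompact_of_isClosed_isBounded hPclosed hbdd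
  have hPne : P.Nonempty := ⟨0, h0P⟩
  have hcoverQ : {u : Fin d → ℝ | ∀ y ∈ P, -1 ≤ u ⬝ᵥ y} ⊆ ⋃ x ∈ V.attach, Δ x := by
    intro u huQ
    have hcont : Continuous fun y : Fin d → ℝ => u ⬝ᵥ y := by
      show Continuous fun y : Fin d → ℝ => ∑ j, u j * y j
      exact continuous_finset_sum _ fun j _ => continuous_const.mul (continuous_apply j)
    obtain ⟨v0, hv0P, hv0min⟩ := hPcmp.exists_isMinOn hPne hcont.continuousOn
    set φ : (Fin d → ℝ) →ₗ[ℝ] ℝ :=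
      { toFun := fun y => -(u ⬝ᵥ y)
        map_add' := fun a b => by first | (simp [dotProduct_add]; ring) | simp [dotProduct_add]
        map_smul' := fun r a => by first | (simp [dotProduct_smul]; ring) | simp [dotProduct_smul] } with hφ
    set ℓ : (Fin d → ℝ) →L[ℝ] ℝ := LinearMap.toContinuousLinearMap φ with hℓ
    have hℓval : ∀ y, ℓ y = -(u ⬝ᵥ y) := by
      intro y
      rw [hℓ, LinearMap.coe_toContinuousLinearMap']
      rfl
    set F : Set (Fin d → ℝ) := {x ∈ P | ∀ y ∈ P, ℓ y ≤ ℓ x} with hF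
    have hFexp : IsExposed ℝ P F := fun _ => ⟨ℓ, hF⟩
    have hFne : F.Nonempty := by
      refine ⟨v0, hv0P, fun y hy => ?_⟩
      rw [hℓval, hℓval]
      exact neg_le_neg (isMinOn_iff.1 hv0min y hy)
    obtain ⟨v, hvF⟩ := (hFexp.isCompact hPcmp).extremePoints_nonempty hFne
    have hvV : v ∈ V := by
      have h1 : v ∈ Set.extremePoints ℝ P :=
        hFexp.isExtreme.extremePoints_subset_extremePoints hvF
      rw [← Finset.mem_coe, hV]
      exact h1
    set x : {v // v ∈ V} := ⟨v, hvV⟩ with hx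
    have hvmin : ∀ y : Fin d → ℝ, (∀ j, 0 ≤ U j ⬝ᵥ y + z j) → u ⬝ᵥ v ≤ u ⬝ᵥ y := by
      intro y hy
      have := hvF.1.2 y ((hmemP y).2 hy)
      rw [hℓval, hℓval] at this
      linarith
    obtain ⟨l, hl0, hlu⟩ := farkas U z v u (Sig x) (fun j => (hmemP v).1 (hxP x) j)
      (hσcover x) (hdetx x) hvmin
    have hsv : u ⬝ᵥ v = -∑ i, l i * z (Sig x i) := by
      rw [hlu, sum_smul_dot, ← Finset.sum_neg_distrib]
      refine Finset.sum_congr rfl fun i _ => ?_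
      rw [show U (Sig x i) ⬝ᵥ v = -z (Sig x i) from by linarith [hσact x i]]
      ring
    have hsum : ∑ i, l i * z (Sig x i) ≤ 1 := by
      have h2 := huQ v (hxP x)
      rw [hsv] at h2
      linarith
    exact Set.mem_biUnion (V.mem_attach x) ⟨l, ⟨hl0, hsum⟩, hlu.symm⟩
  have hQeq : {u : Fin d → ℝ | ∀ y ∈ P, -1 ≤ u ⬝ᵥ y} = ⋃ x ∈ V.attach, Δ x :=
    Set.Subset.antisymm hcoverQ (Set.iUnion₂_subset fun x _ => hΔQ x)
  have hdisj : (V.attach : Set {v // v ∈ V}).Pairwise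
      (Function.onFun (MeasureTheory.AEDisjoint volume) Δ) := by
    intro x _ y _ hxy
    have hsub : Δ x ∩ Δ y ⊆ {u : Fin d → ℝ | u ⬝ᵥ (x.1 - y.1) = 0} := by
      rintro u ⟨hux, huy⟩
      obtain ⟨-, h2⟩ := polyCone_min (hσact x) hux
      obtain ⟨-, h4⟩ := polyCone_min (hσact y) huy
      have e1 := h2 y.1 fun j => (hmemP y.1).1 (hxP y) j
      have e2 := h4 x.1 fun j => (hmemP x.1).1 (hxP x) j
      show u ⬝ᵥ (x.1 - y.1) = 0
      rw [dotProduct_sub]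
      linarith
    have hne : x.1 - y.1 ≠ 0 := by
      intro h
      exact hxy (Subtype.ext (by rwa [sub_eq_zero] at h))
    exact measure_mono_null hsub (hyperplane_null _ hne)
  have hprodpos : ∀ x : {v // v ∈ V}, 0 < ∏ i ∈ S x.1, z i := by
    intro x
    refine Finset.prod_pos fun i hi => ?_
    obtain ⟨i', hi'⟩ := hσcover x i ((hactive x.1 i).1 hi)
    rw [← hi']
    exact hzσ x i'
  have hprodeq : ∀ x : {v // v ∈ V}, ∏ i, z (Sig x i) = ∏ i ∈ S x.1, z i := by
    intro x
    rw [← Finset.prod_coe_sort (S x.1) z]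
    exact Equiv.prod_comp (e x.1 x.2).symm (fun j => z ↑j)
  have hvolx : ∀ x ∈ V.attach, volume (Δ x) = ENNReal.ofReal
      (|(Matrix.of fun i j => U (Sig x i) j).det| / (d.factorial * ∏ i ∈ S x.1, z i)) := by
    intro x _
    rw [hΔ, polyCone_volume U z (Sig x) (hzσ x), hprodeq x]
  rw [hQeq, measure_biUnion_finset₀ hdisj
    (fun x _ => (polyCone_measurable U z (Sig x) (hdetx x)).nullMeasurableSet)]
  rw [Finset.sum_congr rfl hvolx]
  rw [ENNReal.toReal_sum (fun _ _ => ENNReal.ofReal_ne_top)]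
  rw [Finset.mul_sum]
  refine Finset.sum_congr rfl fun x _ => ?_
  rw [ENNReal.toReal_ofReal
    (div_nonneg (abs_nonneg _) (mul_nonneg (Nat.cast_nonneg _) (hprodpos x).le))]
  have hne1 : ((d.factorial : ℝ)) ≠ 0 := by positivity
  have hne2 : (∏ i ∈ S x.1, z i) ≠ 0 := (hprodpos x).ne'
  rw [hSig]
  field_simp
end

section
/- (Normal fan decomposition of the polar dual) With the assumptions above, for each vertex v of P define σ_v = {u : u·v ≤ u·y for all y ∈ P}. Then σ_v ∩ P° is the convex hull of 0 and the points u_F/z_F for facets F containing v, and P° is the union over vertices v of these pieces, with pairwise disjoint interiors. -/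
open Matrix Finset

noncomputable def dotCLM {d : ℕ} (u : Fin d → ℝ) : (Fin d → ℝ) →L[ℝ] ℝ :=
  LinearMap.toContinuousLinearMap
    { toFun := fun y => u ⬝ᵥ y
      map_add' := fun x y => dotProduct_add u x y
      map_smul' := fun c x => by simp [dotProduct_smul] }

@[simp] lemma dotCLM_apply {d : ℕ} (u y : Fin d → ℝ) : dotCLM u y = u ⬝ᵥ y := rfl

lemma exists_dot {d : ℕ} (f : (Fin d → ℝ) →L[ℝ] ℝ) : ∃ w : Fin d → ℝ, ∀ y, f y = w ⬝ᵥ y := by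
  refine ⟨fun j => f (Pi.single j 1), fun y => ?_⟩
  have hy : y = ∑ j, y j • (Pi.single j 1 : Fin d → ℝ) := by
    funext k
    simp [Pi.single_apply, Finset.sum_apply, mul_ite]
  conv_lhs => rw [hy]
  rw [map_sum]
  simp [dotProduct, mul_comm]

lemma dot_self_pos {d : ℕ} {c : Fin d → ℝ} (hc : c ≠ 0) : 0 < c ⬝ᵥ c := by
  rcases lt_or_eq_of_le (Finset.sum_nonneg fun i _ => mul_self_nonneg (c i) : (0:ℝ) ≤ c ⬝ᵥ c) with h | h
  · exact h
  · exact absurd (dotProduct_self_eq_zero.mp h.symm) hc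

/-- Normal fan decomposition of the polar dual: for a bounded full-dimensional
polytope P = {y : U·y + z ≥ 0} with minimal facet representation and 0 ∈ int(P),
for each vertex v the piece σ_v ∩ P° is the convex hull of 0 and the points
u_F / z_F over facets F containing v; these pieces cover P° and have pairwise
disjoint interiors. -/
theorem stmt_11 (d n : ℕ) (hd : 0 < d)
    (U : Fin n → Fin d → ℝ) (z : Fin n → ℝ)
    (P : Set (Fin d → ℝ))
    (hP : P = {y : Fin d → ℝ | ∀ i : Fin n, 0 ≤ U i ⬝ᵥ y + z i})
    (hbdd : Bornology.IsBounded P)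
    (h0 : (0 : Fin d → ℝ) ∈ interior P)
    (hmin : ∀ i : Fin n, ∃ y ∈ P, U i ⬝ᵥ y + z i = 0 ∧ ∀ j : Fin n, j ≠ i → 0 < U j ⬝ᵥ y + z j)
    (V : Finset (Fin d → ℝ)) (hV : (V : Set (Fin d → ℝ)) = Set.extremePoints ℝ P)
    (S : (Fin d → ℝ) → Finset (Fin n))
    (hS : ∀ v : Fin d → ℝ, S v = Finset.univ.filter fun i => U i ⬝ᵥ v + z i = 0)
    -- the polar dual
    (Q : Set (Fin d → ℝ)) (hQ : Q = {u : Fin d → ℝ | ∀ y ∈ P, -1 ≤ u ⬝ᵥ y})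
    -- the normal cones
    (σ : (Fin d → ℝ) → Set (Fin d → ℝ))
    (hσ : ∀ v : Fin d → ℝ, σ v = {u : Fin d → ℝ | ∀ y ∈ P, u ⬝ᵥ v ≤ u ⬝ᵥ y}) :
    (∀ v ∈ V, σ v ∩ Q =
        convexHull ℝ ({0} ∪ {x : Fin d → ℝ | ∃ i ∈ S v, x = (z i)⁻¹ • U i})) ∧
    (Q = ⋃ v ∈ V, σ v ∩ Q) ∧
    (∀ v ∈ V, ∀ w ∈ V, v ≠ w →
        interior (σ v ∩ Q) ∩ interior (σ w ∩ Q) = ∅) := by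
  -- global facts
  have h0P : (0 : Fin d → ℝ) ∈ P := interior_subset h0
  have hPne : P.Nonempty := ⟨0, h0P⟩
  have hPclosed : IsClosed P := by
    rw [hP]
    have : {y : Fin d → ℝ | ∀ i : Fin n, 0 ≤ U i ⬝ᵥ y + z i}
        = ⋂ i : Fin n, {y : Fin d → ℝ | 0 ≤ U i ⬝ᵥ y + z i} := by
      ext y; simp [Set.mem_iInter]
    rw [this]
    exact isClosed_iInter fun i =>
      isClosed_le continuous_const ((dotCLM (U i)).continuous.add continuous_const)
  have hPcomp : IsCompact P := Metric.isCompact_of_isClosed_isBounded hPclosed hbdd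
  have hPconv : Convex ℝ P := by
    rw [hP]
    intro x hx y hy a b ha hb hab
    intro i
    have hx' := hx i
    have hy' := hy i
    have : U i ⬝ᵥ (a • x + b • y) = a * (U i ⬝ᵥ x) + b * (U i ⬝ᵥ y) := by
      simp [dotProduct_add, dotProduct_smul, smul_eq_mul]
    rw [this]
    have hz' : a * z i + b * z i = z i := by rw [← add_mul, hab, one_mul]
    nlinarith [mul_nonneg ha hx', mul_nonneg hb hy']
  have hz0 : ∀ i, 0 ≤ z i := by
    intro i
    have := (hP ▸ h0P) i
    simpa using this
  have hzU : ∀ i, z i = 0 → U i = 0 := by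
    intro i hzi
    by_contra hUi
    obtain ⟨ε, hε, hball⟩ := Metric.mem_nhds_iff.mp (mem_interior_iff_mem_nhds.mp h0)
    set t : ℝ := ε / (2 * (‖U i‖ + 1)) with ht
    have htpos : 0 < t := by positivity
    have hmem : (-t) • U i ∈ Metric.ball (0 : Fin d → ℝ) ε := by
      rw [Metric.mem_ball, dist_zero_right, norm_smul, norm_neg, Real.norm_of_nonneg htpos.le]
      rw [ht, div_mul_eq_mul_div, div_lt_iff₀ (by positivity)]
      nlinarith [norm_nonneg (U i)]
    have hPmem := hball hmem
    have := (hP ▸ hPmem) i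
    simp only [Set.mem_setOf_eq, hzi, add_zero, dotProduct_smul, smul_eq_mul] at this
    nlinarith [dot_self_pos hUi]
  have hVsubP : ∀ v ∈ V, v ∈ P := fun v hv => extremePoints_subset (hV ▸ (Finset.mem_coe.mpr hv))
  have hσconv : ∀ v, Convex ℝ (σ v) := by
    intro v
    rw [hσ]
    intro u1 h1 u2 h2 a b ha hb hab
    intro y hy
    have e1 : ∀ x : Fin d → ℝ, (a • u1 + b • u2) ⬝ᵥ x = a * (u1 ⬝ᵥ x) + b * (u2 ⬝ᵥ x) := by
      intro x; simp [add_dotProduct, smul_dotProduct, smul_eq_mul]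
    rw [e1, e1]
    have := h1 y hy
    have := h2 y hy
    nlinarith
  have hQconv : Convex ℝ Q := by
    rw [hQ]
    intro u1 h1 u2 h2 a b ha hb hab
    intro y hy
    have e1 : (a • u1 + b • u2) ⬝ᵥ y = a * (u1 ⬝ᵥ y) + b * (u2 ⬝ᵥ y) := by
      simp [add_dotProduct, smul_dotProduct, smul_eq_mul]
    rw [e1]
    have := h1 y hy
    have := h2 y hy
    nlinarith
  have h0σQ : ∀ v, (0 : Fin d → ℝ) ∈ σ v ∩ Q := by
    intro v
    constructor
    · rw [hσ]; intro y hy; simp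
    · rw [hQ]; intro y hy; simp
  refine ⟨?_, ?_, ?_⟩
  · -- Part 1
    intro v hv
    have hvP : v ∈ P := hVsubP v hv
    set T : Set (Fin d → ℝ) := {x | ∃ i ∈ S v, x = (z i)⁻¹ • U i} with hT
    have hTfin : ({0} ∪ T : Set (Fin d → ℝ)).Finite := by
      apply Set.Finite.union (Set.finite_singleton 0)
      have hsub' : T ⊆ (fun i => (z i)⁻¹ • U i) '' (S v : Set (Fin n)) := by
        rintro x ⟨i, hi, rfl⟩; exact ⟨i, hi, rfl⟩
      exact Set.Finite.subset (Set.Finite.image _ (S v).finite_toSet) hsub'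
    have hSv : ∀ i ∈ S v, U i ⬝ᵥ v + z i = 0 := by
      intro i hi; rw [hS] at hi; exact (Finset.mem_filter.mp hi).2
    have hsub : {0} ∪ T ⊆ σ v ∩ Q := by
      intro x hx
      rcases hx with hx | hx
      · rw [Set.mem_singleton_iff] at hx; subst hx; exact h0σQ v
      · obtain ⟨i, hi, rfl⟩ := hx
        rcases (lt_or_eq_of_le (hz0 i)) with hz | hz
        · have hiv : U i ⬝ᵥ v = -z i := by have := hSv i hi; linarith
          have hbound : ∀ y ∈ P, (-1 : ℝ) ≤ ((z i)⁻¹ • U i) ⬝ᵥ y := by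
            intro y hy
            have hyi : 0 ≤ U i ⬝ᵥ y + z i := (hP ▸ hy) i
            rw [smul_dotProduct, smul_eq_mul]
            have hinv : (z i)⁻¹ * z i = 1 := inv_mul_cancel₀ hz.ne'
            nlinarith [mul_le_mul_of_nonneg_left
              (show -z i ≤ U i ⬝ᵥ y by linarith) (inv_nonneg.mpr (hz0 i))]
          have hveq : ((z i)⁻¹ • U i) ⬝ᵥ v = -1 := by
            rw [smul_dotProduct, smul_eq_mul, hiv]; field_simp
          constructor
          · rw [hσ]; intro y hy; rw [hveq]; exact hbound y hy
          · rw [hQ]; intro y hy; exact hbound y hy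
        · have hU0 : U i = 0 := hzU i hz.symm
          have : (z i)⁻¹ • U i = (0 : Fin d → ℝ) := by rw [hU0, smul_zero]
          rw [this]; exact h0σQ v
    apply Set.Subset.antisymm
    · intro u hu
      by_contra hnot
      have hCconv : Convex ℝ (convexHull ℝ ({0} ∪ T)) := convex_convexHull ℝ _
      have hCclosed : IsClosed (convexHull ℝ ({0} ∪ T)) := (hTfin.isCompact_convexHull ℝ).isClosed
      obtain ⟨f, s, hfs, hsu⟩ := geometric_hahn_banach_closed_point hCconv hCclosed hnot
      obtain ⟨wv, hw⟩ := exists_dot f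
      have h0C : (0 : Fin d → ℝ) ∈ convexHull ℝ ({0} ∪ T) :=
        subset_convexHull ℝ _ (Or.inl rfl)
      have hs0 : 0 < s := by
        have := hfs 0 h0C; rw [hw] at this; simpa using this
      have hb : s < wv ⬝ᵥ u := by rw [← hw]; exact hsu
      set e : Fin d → ℝ := (-s) • v - wv with he
      have hedot : ∀ i ∈ S v, 0 ≤ U i ⬝ᵥ e := by
        intro i hi
        have hiv : U i ⬝ᵥ v = -z i := by have := hSv i hi; linarith
        have hUw : U i ⬝ᵥ wv ≤ s * z i := by
          rcases (lt_or_eq_of_le (hz0 i)) with hz | hz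
          · have hmemC : (z i)⁻¹ • U i ∈ convexHull ℝ ({0} ∪ T) :=
              subset_convexHull ℝ _ (Or.inr ⟨i, hi, rfl⟩)
            have h1 := hfs _ hmemC
            rw [hw, dotProduct_smul, smul_eq_mul] at h1
            have h2 : wv ⬝ᵥ U i < s * z i := by
              have := (mul_lt_mul_of_pos_left h1 hz)
              calc wv ⬝ᵥ U i = z i * ((z i)⁻¹ * (wv ⬝ᵥ U i)) := by field_simp
                _ < z i * s := this
                _ = s * z i := mul_comm _ _
            rw [dotProduct_comm]; exact h2.le
          · have hU0 : U i = 0 := hzU i hz.symm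
            rw [hU0, zero_dotProduct, ← hz]; simp
        have hexp : U i ⬝ᵥ e = s * z i - U i ⬝ᵥ wv := by
          rw [he, dotProduct_sub, dotProduct_smul, smul_eq_mul, hiv]; ring
        rw [hexp]; linarith
      have hopen : ∃ t : ℝ, 0 < t ∧ ∀ i, i ∉ S v → 0 < U i ⬝ᵥ v + z i + t * (U i ⬝ᵥ e) := by
        set A : Set ℝ := ⋂ i : Fin n, {t : ℝ | i ∈ S v ∨ 0 < U i ⬝ᵥ v + z i + t * (U i ⬝ᵥ e)}
          with hA
        have hAopen : IsOpen A := by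
          apply isOpen_iInter_of_finite
          intro i
          by_cases hi : i ∈ S v
          · have : {t : ℝ | i ∈ S v ∨ 0 < U i ⬝ᵥ v + z i + t * (U i ⬝ᵥ e)} = Set.univ :=
              Set.eq_univ_iff_forall.mpr fun t => Or.inl hi
            rw [this]; exact isOpen_univ
          · have : {t : ℝ | i ∈ S v ∨ 0 < U i ⬝ᵥ v + z i + t * (U i ⬝ᵥ e)}
                = {t : ℝ | 0 < U i ⬝ᵥ v + z i + t * (U i ⬝ᵥ e)} := by
              ext t; simp [hi]
            rw [this]
            exact isOpen_lt continuous_const (continuous_const.add (continuous_id.mul continuous_const))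
        have h0A : (0 : ℝ) ∈ A := by
          rw [hA, Set.mem_iInter]
          intro i
          by_cases hi : i ∈ S v
          · exact Or.inl hi
          · right
            have hge : 0 ≤ U i ⬝ᵥ v + z i := (hP ▸ hvP) i
            have hne' : U i ⬝ᵥ v + z i ≠ 0 := by
              rw [hS] at hi; simpa using hi
            have : 0 < U i ⬝ᵥ v + z i := lt_of_le_of_ne hge (Ne.symm hne')
            simpa using this
        obtain ⟨ε, hε, hball⟩ := Metric.isOpen_iff.mp hAopen 0 h0A
        refine ⟨ε / 2, by positivity, ?_⟩
        intro i hi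
        have hmem : (ε / 2 : ℝ) ∈ A := by
          apply hball
          rw [Metric.mem_ball, dist_zero_right, Real.norm_of_nonneg (by positivity)]
          linarith
        rw [hA, Set.mem_iInter] at hmem
        rcases hmem i with h | h
        · exact absurd h hi
        · exact h
      obtain ⟨t, htpos, ht⟩ := hopen
      have hyP : v + t • e ∈ P := by
        rw [hP]
        intro i
        have hexp : U i ⬝ᵥ (v + t • e) = U i ⬝ᵥ v + t * (U i ⬝ᵥ e) := by
          rw [dotProduct_add, dotProduct_smul, smul_eq_mul]
        show 0 ≤ U i ⬝ᵥ (v + t • e) + z i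
        rw [hexp]
        by_cases hi : i ∈ S v
        · have h1 := hSv i hi
          have h2 := hedot i hi
          nlinarith
        · have := ht i hi
          linarith
      obtain ⟨huσ, huQ⟩ := hu
      rw [hσ] at huσ
      have h1 := huσ (v + t • e) hyP
      rw [hQ] at huQ
      have h2 := huQ v hvP
      have h3 : u ⬝ᵥ (v + t • e) = u ⬝ᵥ v + t * (u ⬝ᵥ e) := by
        rw [dotProduct_add, dotProduct_smul, smul_eq_mul]
      have h4 : u ⬝ᵥ e = -s * (u ⬝ᵥ v) - u ⬝ᵥ wv := by
        rw [he, dotProduct_sub, dotProduct_smul, smul_eq_mul]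
      have h5 : u ⬝ᵥ wv = wv ⬝ᵥ u := dotProduct_comm u wv
      have h6 : 0 ≤ u ⬝ᵥ e := by nlinarith
      nlinarith
    · exact convexHull_min hsub ((hσconv v).inter hQconv)
  · -- Part 2: covering
    apply Set.Subset.antisymm
    · intro u hu
      set l : (Fin d → ℝ) →L[ℝ] ℝ := dotCLM (-u) with hl
      set B : Set (Fin d → ℝ) := {x ∈ P | ∀ y ∈ P, l y ≤ l x} with hB
      have hexp : IsExposed ℝ P B := fun _ => ⟨l, rfl⟩
      have hBne : B.Nonempty := by
        obtain ⟨x₀, hx₀P, hmin'⟩ := hPcomp.exists_isMinOn hPne (dotCLM u).continuous.continuousOn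
        refine ⟨x₀, hx₀P, fun y hy => ?_⟩
        have h1 := hmin' hy
        simp only [dotCLM_apply] at h1
        simp only [hl, dotCLM_apply, neg_dotProduct]
        exact neg_le_neg h1
      have hBcomp := hexp.isCompact hPcomp
      obtain ⟨xe, hxe⟩ := hBcomp.extremePoints_nonempty hBne
      have hxeP : xe ∈ Set.extremePoints ℝ P :=
        hexp.isExtreme.extremePoints_subset_extremePoints hxe
      have hxeV : xe ∈ V := by rw [← Finset.mem_coe, hV]; exact hxeP
      have hxeB : xe ∈ B := hxe.1
      refine Set.mem_biUnion hxeV ⟨?_, hu⟩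
      rw [hσ]
      intro y hy
      have h2 := hxeB.2 y hy
      simp only [hl, dotCLM_apply, neg_dotProduct] at h2
      linarith
    · exact Set.iUnion₂_subset fun v _ => Set.inter_subset_right
  · -- Part 3: disjoint interiors
    intro v hv w hw hvw
    by_contra hne
    obtain ⟨x, hx1, hx2⟩ := Set.nonempty_iff_ne_empty.mpr hne
    set c : Fin d → ℝ := v - w with hc
    have hcne : c ≠ 0 := sub_ne_zero.mpr hvw
    have hcc : 0 < c ⬝ᵥ c := dot_self_pos hcne
    have hO : IsOpen (interior (σ v ∩ Q) ∩ interior (σ w ∩ Q)) :=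
      isOpen_interior.inter isOpen_interior
    obtain ⟨ε, hε, hball⟩ := Metric.isOpen_iff.mp hO x ⟨hx1, hx2⟩
    set t : ℝ := ε / (2 * (‖c‖ + 1)) with htdef
    have htpos : 0 < t := by positivity
    have hmem : x + t • c ∈ Metric.ball x ε := by
      rw [Metric.mem_ball, dist_eq_norm, add_sub_cancel_left, norm_smul,
        Real.norm_of_nonneg htpos.le]
      rw [htdef, div_mul_eq_mul_div, div_lt_iff₀ (by positivity)]
      nlinarith [norm_nonneg c]
    have key : ∀ p ∈ interior (σ v ∩ Q) ∩ interior (σ w ∩ Q), p ⬝ᵥ c = 0 := by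
      intro p hp
      have hpv : p ∈ σ v := (interior_subset hp.1).1
      have hpw : p ∈ σ w := (interior_subset hp.2).1
      rw [hσ] at hpv hpw
      have h1 := hpv w (hVsubP w hw)
      have h2 := hpw v (hVsubP v hv)
      rw [hc, dotProduct_sub]
      linarith
    have e1 := key x ⟨hx1, hx2⟩
    have e2 := key (x + t • c) (hball hmem)
    rw [add_dotProduct, smul_dotProduct, smul_eq_mul, e1] at e2
    nlinarith
end

section
/- (Triangulation property for a pyramid) Let P be the pyramid with vertices (0,0,1), (1,1,0), (-1,1,0), (-1,-1,0), (1,-1,0), subdivided into two tetrahedra Δ₁ (vertices (0,0,1),(1,1,0),(-1,1,0),(-1,-1,0)) and Δ₂ (vertices (0,0,1),(1,1,0),(-1,-1,0),(1,-1,0)). Then the dual volume function of P equals the sum of the dual volume functions of Δ₁ and Δ₂: for y in the interior of P, vol((P-y)°) = vol((Δ₁-y)°) + vol((Δ₂-y)°) wherever all three are defined, as an identity of rational functions. -/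
open MeasureTheory Matrix

section helpers
open Set

private theorem volA' (t : ℝ) (ht : 0 ≤ t) :
    volume {q : ℝ × ℝ | 0 ≤ q.1 ∧ 0 ≤ q.2 ∧ q.1 + q.2 ≤ t} = ENNReal.ofReal (t^2/2) := by
  have hm : MeasurableSet {q : ℝ × ℝ | 0 ≤ q.1 ∧ 0 ≤ q.2 ∧ q.1 + q.2 ≤ t} := by
    apply MeasurableSet.inter
    · exact measurableSet_le measurable_const measurable_fst
    apply MeasurableSet.inter
    · exact measurableSet_le measurable_const measurable_snd
    · exact measurableSet_le (measurable_fst.add measurable_snd) measurable_const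
  rw [show (volume : Measure (ℝ × ℝ)) = (volume : Measure ℝ).prod volume from rfl,
    Measure.prod_apply hm]
  have hslice : ∀ a : ℝ, volume (Prod.mk a ⁻¹' {q : ℝ × ℝ | 0 ≤ q.1 ∧ 0 ≤ q.2 ∧ q.1 + q.2 ≤ t})
      = (Icc (0:ℝ) t).indicator (fun a => ENNReal.ofReal (t - a)) a := by
    intro a
    by_cases ha : 0 ≤ a
    · have : Prod.mk a ⁻¹' {q : ℝ × ℝ | 0 ≤ q.1 ∧ 0 ≤ q.2 ∧ q.1 + q.2 ≤ t} = Icc 0 (t - a) := by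
        ext b; simp [Set.mem_Icc, ha]; intro _; constructor <;> intro h <;> linarith
      rw [this, Real.volume_Icc]
      by_cases hat : a ≤ t
      · rw [indicator_of_mem (by exact ⟨ha, hat⟩)]; ring_nf
      · rw [indicator_of_notMem (by simp [hat])]
        rw [ENNReal.ofReal_eq_zero]; linarith
    · have : Prod.mk a ⁻¹' {q : ℝ × ℝ | 0 ≤ q.1 ∧ 0 ≤ q.2 ∧ q.1 + q.2 ≤ t} = ∅ := by
        ext b; simp; intro h; exact absurd h ha
      rw [this, measure_empty, indicator_of_notMem (by simp; intro h; exact absurd h ha)]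
  rw [lintegral_congr hslice, lintegral_indicator measurableSet_Icc _]
  rw [← ofReal_integral_eq_lintegral_ofReal]
  · congr 1
    rw [integral_Icc_eq_integral_Ioc, ← intervalIntegral.integral_of_le ht]
    have : ∫ a in (0:ℝ)..t, (t - a) = t^2/2 := by
      rw [intervalIntegral.integral_comp_sub_left (fun x : ℝ => x) t]
      simp [integral_id]
    rw [this]
  · exact (continuous_const.sub continuous_id).integrableOn_Icc
  · filter_upwards [ae_restrict_mem measurableSet_Icc] with a ha
    simp only [Pi.zero_apply, mem_Icc] at *; linarith [ha.2]

private theorem volS3' :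
    volume {p : ℝ × ℝ × ℝ | 0 ≤ p.1 ∧ 0 ≤ p.2.1 ∧ 0 ≤ p.2.2 ∧ p.1 + p.2.1 + p.2.2 ≤ 1}
      = ENNReal.ofReal (1/6) := by
  have hm : MeasurableSet {p : ℝ × ℝ × ℝ | 0 ≤ p.1 ∧ 0 ≤ p.2.1 ∧ 0 ≤ p.2.2 ∧ p.1 + p.2.1 + p.2.2 ≤ 1} := by
    refine MeasurableSet.inter ?_ (MeasurableSet.inter ?_ (MeasurableSet.inter ?_ ?_))
    · exact measurableSet_le measurable_const measurable_fst
    · exact measurableSet_le measurable_const (measurable_fst.comp measurable_snd)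
    · exact measurableSet_le measurable_const (measurable_snd.comp measurable_snd)
    · exact measurableSet_le
        ((measurable_fst.add (measurable_fst.comp measurable_snd)).add
          (measurable_snd.comp measurable_snd)) measurable_const
  rw [show (volume : Measure (ℝ × ℝ × ℝ)) = (volume : Measure ℝ).prod volume from rfl,
    Measure.prod_apply hm]
  have hslice : ∀ a : ℝ,
      volume (Prod.mk a ⁻¹' {p : ℝ × ℝ × ℝ | 0 ≤ p.1 ∧ 0 ≤ p.2.1 ∧ 0 ≤ p.2.2 ∧ p.1 + p.2.1 + p.2.2 ≤ 1})
      = (Icc (0:ℝ) 1).indicator (fun a => ENNReal.ofReal ((1-a)^2/2)) a := by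
    intro a
    by_cases ha : 0 ≤ a
    · have he : Prod.mk a ⁻¹' {p : ℝ × ℝ × ℝ | 0 ≤ p.1 ∧ 0 ≤ p.2.1 ∧ 0 ≤ p.2.2 ∧ p.1 + p.2.1 + p.2.2 ≤ 1}
          = {q : ℝ × ℝ | 0 ≤ q.1 ∧ 0 ≤ q.2 ∧ q.1 + q.2 ≤ 1 - a} := by
        ext q; simp [ha]; intro _ _; constructor <;> intro h <;> linarith
      rw [he]
      by_cases hat : a ≤ 1
      · rw [volA' _ (by linarith)]
        exact (indicator_of_mem (mem_Icc.mpr ⟨ha, hat⟩) (fun a => ENNReal.ofReal ((1-a)^2/2))).symm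
      · have : {q : ℝ × ℝ | 0 ≤ q.1 ∧ 0 ≤ q.2 ∧ q.1 + q.2 ≤ 1 - a} = ∅ := by
          ext q; simp; intro h1 h2; linarith
        rw [this, measure_empty, indicator_of_notMem (by simp [hat])]
    · have : Prod.mk a ⁻¹' {p : ℝ × ℝ × ℝ | 0 ≤ p.1 ∧ 0 ≤ p.2.1 ∧ 0 ≤ p.2.2 ∧ p.1 + p.2.1 + p.2.2 ≤ 1} = ∅ := by
        ext q; simp; intro h; exact absurd h ha
      rw [this, measure_empty, indicator_of_notMem (by simp; intro h; exact absurd h ha)]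
  rw [lintegral_congr hslice, lintegral_indicator measurableSet_Icc _]
  rw [← ofReal_integral_eq_lintegral_ofReal]
  · congr 1
    rw [integral_Icc_eq_integral_Ioc, ← intervalIntegral.integral_of_le (by norm_num : (0:ℝ) ≤ 1)]
    have : ∫ a in (0:ℝ)..1, ((1-a)^2/2) = 1/6 := by
      have : (fun a : ℝ => (1-a)^2/2) = (fun a : ℝ => (fun x : ℝ => x^2/2) (1 - a)) := rfl
      rw [this, intervalIntegral.integral_comp_sub_left (fun x : ℝ => x^2/2) 1]
      norm_num [intervalIntegral.integral_div, integral_pow]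
    rw [this]
  · exact (Continuous.integrableOn_Icc (by continuity))
  · filter_upwards [] with a
    simp only [Pi.zero_apply]; positivity

private theorem volS' :
    volume {x : Fin 3 → ℝ | 0 ≤ x 0 ∧ 0 ≤ x 1 ∧ 0 ≤ x 2 ∧ x 0 + x 1 + x 2 ≤ 1}
      = ENNReal.ofReal (1/6) := by
  have h1 := volume_preserving_piFinSuccAbove (fun _ : Fin 3 => ℝ) 0
  have h2 := (MeasurePreserving.id (volume : Measure ℝ)).prod
    (volume_preserving_finTwoArrow ℝ)
  have hE := h2.comp h1
  have hm : MeasurableSet {p : ℝ × ℝ × ℝ | 0 ≤ p.1 ∧ 0 ≤ p.2.1 ∧ 0 ≤ p.2.2 ∧ p.1 + p.2.1 + p.2.2 ≤ 1} := by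
    refine MeasurableSet.inter ?_ (MeasurableSet.inter ?_ (MeasurableSet.inter ?_ ?_))
    · exact measurableSet_le measurable_const measurable_fst
    · exact measurableSet_le measurable_const (measurable_fst.comp measurable_snd)
    · exact measurableSet_le measurable_const (measurable_snd.comp measurable_snd)
    · exact measurableSet_le
        ((measurable_fst.add (measurable_fst.comp measurable_snd)).add
          (measurable_snd.comp measurable_snd)) measurable_const
  have key := hE.measure_preimage hm.nullMeasurableSet
  have hset : ((Prod.map id (MeasurableEquiv.finTwoArrow)) ∘
        (MeasurableEquiv.piFinSuccAbove (fun _ : Fin 3 => ℝ) 0)) ⁻¹'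
        {p : ℝ × ℝ × ℝ | 0 ≤ p.1 ∧ 0 ≤ p.2.1 ∧ 0 ≤ p.2.2 ∧ p.1 + p.2.1 + p.2.2 ≤ 1}
      = {x : Fin 3 → ℝ | 0 ≤ x 0 ∧ 0 ≤ x 1 ∧ 0 ≤ x 2 ∧ x 0 + x 1 + x 2 ≤ 1} := by
    ext x
    simp [MeasurableEquiv.piFinSuccAbove, MeasurableEquiv.finTwoArrow, Fin.succAbove,
      Fin.insertNthEquiv, Fin.tail]
  rw [hset] at key
  rw [key, show ((volume : Measure ℝ).prod (volume : Measure (ℝ × ℝ))) = (volume : Measure (ℝ × ℝ × ℝ)) from rfl, volS3']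

private theorem volAff' (A : Fin 3 → ℝ) (M : Matrix (Fin 3) (Fin 3) ℝ) (s : Set (Fin 3 → ℝ)) :
    volume ((fun x => A + M.mulVec x) '' s) = ENNReal.ofReal |M.det| * volume s := by
  have h1 : (fun x => A + M.mulVec x) '' s = (fun v => A + v) '' (Matrix.toLin' M '' s) := by
    rw [← Set.image_comp]
    rfl
  have h2 := congrFun (Set.image_eq_preimage_of_inverse (f := fun v : Fin 3 → ℝ => A + v)
    (g := fun v : Fin 3 → ℝ => -A + v) (fun v => by simp) (fun v => by simp))
    (Matrix.toLin' M '' s)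
  rw [h1, h2, measure_preimage_add, Measure.addHaar_image_linearMap, LinearMap.det_toLin']

end helpers

set_option maxHeartbeats 2000000 in
/-- Triangulation property for the pyramid P with vertices (0,0,1), (±1,±1,0), subdivided
into the two tetrahedra Δ₁ = conv{(0,0,1),(1,1,0),(-1,1,0),(-1,-1,0)} and
Δ₂ = conv{(0,0,1),(1,1,0),(-1,-1,0),(1,-1,0)}: for y in the interior of P (away from the
internal wall y₁ = y₂, where the spurious poles of the two summands cancel), the normalized
dual volume vol((P-y)°) equals the sum of the rational functions given by the vertex-sum
(canonical form) formula for Δ₁ and Δ₂, i.e. the meromorphic continuations of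
vol((Δ₁-y)°) and vol((Δ₂-y)°). -/
theorem stmt_14 (y : Fin 3 → ℝ)
    (P : Set (Fin 3 → ℝ))
    (hP : P = convexHull ℝ
      ({![0,0,1], ![1,1,0], ![-1,1,0], ![-1,-1,0], ![1,-1,0]} : Set (Fin 3 → ℝ)))
    (hy : y ∈ interior P) (hwall : y 0 ≠ y 1) :
    ((Nat.factorial 3 : ℝ)) *
        (volume {u : Fin 3 → ℝ | ∀ p ∈ P, -1 ≤ u ⬝ᵥ (p - y)}).toReal
      = 2 / (y 2 * (y 0 - y 2 + 1) * (y 1 - y 0) * (1 - y 1 - y 2))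
      + 2 / (y 2 * (y 1 - y 2 + 1) * (1 - y 0 - y 2) * (y 0 - y 1)) := by
  subst hP
  -- interior facts
  obtain ⟨hc, ha, hb, hg, hd⟩ :
      0 < y 2 ∧ 0 < 1 - y 0 - y 2 ∧ 0 < 1 + y 0 - y 2 ∧ 0 < 1 - y 1 - y 2 ∧ 0 < 1 + y 1 - y 2 := by
    obtain ⟨ε, hε, hball⟩ := Metric.mem_nhds_iff.1 (mem_interior_iff_mem_nhds.1 hy)
    have hpt : ∀ (i : Fin 3) (t : ℝ), |t| < ε →
        Function.update y i (y i + t) ∈ convexHull ℝ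
          ({![0,0,1], ![1,1,0], ![-1,1,0], ![-1,-1,0], ![1,-1,0]} : Set (Fin 3 → ℝ)) := by
      intro i t ht
      apply hball
      rw [Metric.mem_ball, dist_pi_lt_iff hε]
      intro j
      by_cases hj : j = i
      · subst hj; simp [Real.dist_eq, ht]
      · simp [Function.update_of_ne hj, hε]
    have hsub : ∀ (f : (Fin 3 → ℝ) → ℝ) (r : ℝ), IsLinearMap ℝ f →
        f ![0,0,1] ≤ r → f ![1,1,0] ≤ r → f ![-1,1,0] ≤ r → f ![-1,-1,0] ≤ r → f ![1,-1,0] ≤ r →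
        ∀ p ∈ convexHull ℝ
          ({![0,0,1], ![1,1,0], ![-1,1,0], ![-1,-1,0], ![1,-1,0]} : Set (Fin 3 → ℝ)), f p ≤ r := by
      intro f r hf h1 h2 h3 h4 h5 p hp
      exact convexHull_min (show ({![0,0,1], ![1,1,0], ![-1,1,0], ![-1,-1,0], ![1,-1,0]} :
          Set (Fin 3 → ℝ)) ⊆ {q | f q ≤ r} by
        intro q hq
        simp only [Set.mem_insert_iff, Set.mem_singleton_iff] at hq
        rcases hq with rfl|rfl|rfl|rfl|rfl <;> assumption)
        (convex_halfSpace_le hf r) hp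
    have lin0 : IsLinearMap ℝ (fun p : Fin 3 → ℝ => -p 2) :=
      ⟨fun x y => by simp; try ring, fun c x => by simp; try ring⟩
    have lin1 : IsLinearMap ℝ (fun p : Fin 3 → ℝ => p 0 + p 2) :=
      ⟨fun x y => by simp; try ring, fun c x => by simp; try ring⟩
    have lin2 : IsLinearMap ℝ (fun p : Fin 3 → ℝ => -p 0 + p 2) :=
      ⟨fun x y => by simp; try ring, fun c x => by simp; try ring⟩
    have lin3 : IsLinearMap ℝ (fun p : Fin 3 → ℝ => p 1 + p 2) :=
      ⟨fun x y => by simp; try ring, fun c x => by simp; try ring⟩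
    have lin4 : IsLinearMap ℝ (fun p : Fin 3 → ℝ => -p 1 + p 2) :=
      ⟨fun x y => by simp; try ring, fun c x => by simp; try ring⟩
    have habs : |(-(ε/2) : ℝ)| < ε := by rw [abs_neg, abs_of_pos (by linarith)]; linarith
    have habs' : |(ε/2 : ℝ)| < ε := by rw [abs_of_pos (by linarith)]; linarith
    refine ⟨?_, ?_, ?_, ?_, ?_⟩
    · have := hsub _ 0 lin0 (by simp) (by simp) (by simp) (by simp) (by simp)
        _ (hpt 2 (-(ε/2)) habs)
      simp [Function.update_self] at this
      linarith
    · have := hsub _ 1 lin1 (by simp) (by simp) (by simp) (by simp) (by simp)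
        _ (hpt 0 (ε/2) habs')
      simp [Function.update_self, Function.update_of_ne] at this
      linarith
    · have := hsub _ 1 lin2 (by simp) (by simp) (by simp) (by simp) (by simp)
        _ (hpt 0 (-(ε/2)) habs)
      simp [Function.update_self, Function.update_of_ne] at this
      linarith
    · have := hsub _ 1 lin3 (by simp) (by simp) (by simp) (by simp) (by simp)
        _ (hpt 1 (ε/2) habs')
      simp [Function.update_self, Function.update_of_ne] at this
      linarith
    · have := hsub _ 1 lin4 (by simp) (by simp) (by simp) (by simp) (by simp)
        _ (hpt 1 (-(ε/2)) habs)
      simp [Function.update_self, Function.update_of_ne] at this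
      linarith
  have hc' := hc.ne'
  have ha' := ha.ne'
  have hb' := hb.ne'
  have hg' := hg.ne'
  have hd' := hd.ne'
  -- vertex description of the dual
  have hQ : {u : Fin 3 → ℝ | ∀ p ∈ convexHull ℝ
        ({![0,0,1], ![1,1,0], ![-1,1,0], ![-1,-1,0], ![1,-1,0]} : Set (Fin 3 → ℝ)),
        -1 ≤ u ⬝ᵥ (p - y)}
      = {u : Fin 3 → ℝ |
        (-1 ≤ u 0 * (0 - y 0) + u 1 * (0 - y 1) + u 2 * (1 - y 2)) ∧
        (-1 ≤ u 0 * (1 - y 0) + u 1 * (1 - y 1) + u 2 * (0 - y 2)) ∧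
        (-1 ≤ u 0 * (-1 - y 0) + u 1 * (1 - y 1) + u 2 * (0 - y 2)) ∧
        (-1 ≤ u 0 * (-1 - y 0) + u 1 * (-1 - y 1) + u 2 * (0 - y 2)) ∧
        (-1 ≤ u 0 * (1 - y 0) + u 1 * (-1 - y 1) + u 2 * (0 - y 2))} := by
    have hdot : ∀ (u : Fin 3 → ℝ) (p : Fin 3 → ℝ),
        u ⬝ᵥ (p - y) = u 0 * (p 0 - y 0) + u 1 * (p 1 - y 1) + u 2 * (p 2 - y 2) := by
      intro u p
      simp [dotProduct, Fin.sum_univ_three]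
    ext u
    constructor
    · intro hu
      have hg' : ∀ v ∈ ({![0,0,1], ![1,1,0], ![-1,1,0], ![-1,-1,0], ![1,-1,0]} :
          Set (Fin 3 → ℝ)), -1 ≤ u ⬝ᵥ (v - y) := fun v hv => hu v (subset_convexHull ℝ _ hv)
      refine ⟨?_, ?_, ?_, ?_, ?_⟩
      · have := hg' ![0,0,1] (by simp); rwa [hdot] at this
      · have := hg' ![1,1,0] (by simp); rwa [hdot] at this
      · have := hg' ![-1,1,0] (by simp); rwa [hdot] at this
      · have := hg' ![-1,-1,0] (by simp); rwa [hdot] at this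
      · have := hg' ![1,-1,0] (by simp); rwa [hdot] at this
    · rintro ⟨h0, h1, h2, h3, h4⟩ p hp
      have hconv : Convex ℝ {q : Fin 3 → ℝ | -1 ≤ u ⬝ᵥ (q - y)} := by
        have : {q : Fin 3 → ℝ | -1 ≤ u ⬝ᵥ (q - y)} =
            {q : Fin 3 → ℝ | -1 + (u 0 * y 0 + u 1 * y 1 + u 2 * y 2) ≤
              u 0 * q 0 + u 1 * q 1 + u 2 * q 2} := by
          ext q; rw [Set.mem_setOf_eq, Set.mem_setOf_eq, hdot]
          constructor <;> intro h <;> linarith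
        rw [this]
        exact convex_halfSpace_ge
          ⟨fun a b => by simp; ring, fun c a => by simp; ring⟩ _
      refine convexHull_min ?_ hconv hp
      intro q hq
      simp only [Set.mem_insert_iff, Set.mem_singleton_iff] at hq
      rcases hq with rfl|rfl|rfl|rfl|rfl <;> rw [Set.mem_setOf_eq, hdot] <;> simp <;> linarith
  -- the two halves of the dual are affine images of the corner simplex
  have hmv1 : ∀ x : Fin 3 → ℝ,
      (![(0:ℝ),0,1/y 2] +
        (Matrix.of ![![-(1/(1 - y 0 - y 2)), 1/(1 + y 0 - y 2), 0],
          ![0, 0, -(1/(1 - y 1 - y 2))],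
          ![-(1/(1 - y 0 - y 2)) - 1/y 2, -(1/(1 + y 0 - y 2)) - 1/y 2,
            -(1/(1 - y 1 - y 2)) - 1/y 2]]).mulVec x)
      = ![-(1/(1 - y 0 - y 2)) * x 0 + 1/(1 + y 0 - y 2) * x 1,
          -(1/(1 - y 1 - y 2)) * x 2,
          1/y 2 + ((-(1/(1 - y 0 - y 2)) - 1/y 2) * x 0 + (-(1/(1 + y 0 - y 2)) - 1/y 2) * x 1
            + (-(1/(1 - y 1 - y 2)) - 1/y 2) * x 2)] := by
    intro x
    funext i
    fin_cases i <;>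
      simp [Matrix.mulVec, dotProduct, Fin.sum_univ_three] <;> try ring
  have hmv2 : ∀ x : Fin 3 → ℝ,
      (![(0:ℝ),0,1/y 2] +
        (Matrix.of ![![-(1/(1 - y 0 - y 2)), 1/(1 + y 0 - y 2), 0],
          ![0, 0, 1/(1 + y 1 - y 2)],
          ![-(1/(1 - y 0 - y 2)) - 1/y 2, -(1/(1 + y 0 - y 2)) - 1/y 2,
            -(1/(1 + y 1 - y 2)) - 1/y 2]]).mulVec x)
      = ![-(1/(1 - y 0 - y 2)) * x 0 + 1/(1 + y 0 - y 2) * x 1,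
          1/(1 + y 1 - y 2) * x 2,
          1/y 2 + ((-(1/(1 - y 0 - y 2)) - 1/y 2) * x 0 + (-(1/(1 + y 0 - y 2)) - 1/y 2) * x 1
            + (-(1/(1 + y 1 - y 2)) - 1/y 2) * x 2)] := by
    intro x
    funext i
    fin_cases i <;>
      simp [Matrix.mulVec, dotProduct, Fin.sum_univ_three] <;> try ring
  have hT1 : {u : Fin 3 → ℝ |
      ((-1 ≤ u 0 * (0 - y 0) + u 1 * (0 - y 1) + u 2 * (1 - y 2)) ∧
      (-1 ≤ u 0 * (1 - y 0) + u 1 * (1 - y 1) + u 2 * (0 - y 2)) ∧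
      (-1 ≤ u 0 * (-1 - y 0) + u 1 * (1 - y 1) + u 2 * (0 - y 2)) ∧
      (-1 ≤ u 0 * (-1 - y 0) + u 1 * (-1 - y 1) + u 2 * (0 - y 2)) ∧
      (-1 ≤ u 0 * (1 - y 0) + u 1 * (-1 - y 1) + u 2 * (0 - y 2))) ∧ u 1 ≤ 0}
    = (fun x : Fin 3 → ℝ => ![(0:ℝ),0,1/y 2] +
        (Matrix.of ![![-(1/(1 - y 0 - y 2)), 1/(1 + y 0 - y 2), 0],
          ![0, 0, -(1/(1 - y 1 - y 2))],
          ![-(1/(1 - y 0 - y 2)) - 1/y 2, -(1/(1 + y 0 - y 2)) - 1/y 2,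
            -(1/(1 - y 1 - y 2)) - 1/y 2]]).mulVec x) ''
      {x : Fin 3 → ℝ | 0 ≤ x 0 ∧ 0 ≤ x 1 ∧ 0 ≤ x 2 ∧ x 0 + x 1 + x 2 ≤ 1} := by
    ext u
    simp only [Set.mem_setOf_eq, Set.mem_image, hmv1]
    constructor
    · rintro ⟨⟨h0, h1, h2, h3, h4⟩, ht⟩
      refine ⟨![((1 - y 0 - y 2)/2) * (1 + (u 0 * (-1 - y 0) + u 1 * (1 - y 1) + u 2 * (0 - y 2))),
        ((1 + y 0 - y 2)/2) * (1 + (u 0 * (1 - y 0) + u 1 * (1 - y 1) + u 2 * (0 - y 2))),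
        -(1 - y 1 - y 2) * u 1], ⟨?_, ?_, ?_, ?_⟩, ?_⟩
      · simp only [Matrix.cons_val_zero]
        nlinarith
      · simp only [Matrix.cons_val_one, Matrix.head_cons, Matrix.cons_val_zero]
        nlinarith
      · simp only [Matrix.cons_val_two, Matrix.tail_cons, Matrix.head_cons]
        nlinarith
      · simp only [Matrix.cons_val_zero, Matrix.cons_val_one, Matrix.head_cons,
          Matrix.cons_val_two, Matrix.tail_cons]
        nlinarith [mul_nonneg hc.le (by linarith :
          (0:ℝ) ≤ 1 + (u 0 * (0 - y 0) + u 1 * (0 - y 1) + u 2 * (1 - y 2)))]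
      · funext i
        fin_cases i
        · show _ = u 0
          simp only [Matrix.cons_val_zero, Matrix.cons_val_one, Matrix.head_cons,
            Matrix.cons_val_two, Matrix.tail_cons, Fin.reduceFinMk]
          field_simp
          ring
        · show _ = u 1
          simp only [Matrix.cons_val_zero, Matrix.cons_val_one, Matrix.head_cons,
            Matrix.cons_val_two, Matrix.tail_cons, Fin.reduceFinMk]
          field_simp
          try ring
        · show _ = u 2
          simp only [Matrix.cons_val_zero, Matrix.cons_val_one, Matrix.head_cons,
            Matrix.cons_val_two, Matrix.tail_cons, Fin.reduceFinMk]
          field_simp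
          ring
    · rintro ⟨x, ⟨hx0, hx1, hx2, hxs⟩, rfl⟩
      simp only [Matrix.cons_val_zero, Matrix.cons_val_one, Matrix.head_cons,
        Matrix.cons_val_two, Matrix.tail_cons]
      refine ⟨⟨?_, ?_, ?_, ?_, ?_⟩, ?_⟩
      · have key : (-(1/(1 - y 0 - y 2)) * x 0 + 1/(1 + y 0 - y 2) * x 1) * (0 - y 0)
            + (-(1/(1 - y 1 - y 2)) * x 2) * (0 - y 1)
            + (1/y 2 + ((-(1/(1 - y 0 - y 2)) - 1/y 2) * x 0 + (-(1/(1 + y 0 - y 2)) - 1/y 2) * x 1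
              + (-(1/(1 - y 1 - y 2)) - 1/y 2) * x 2)) * (1 - y 2)
            = -1 + (1 - x 0 - x 1 - x 2) * (1/y 2) := by
          field_simp
          ring
        rw [key]
        have : 0 < 1/y 2 := by positivity
        nlinarith
      · have key : (-(1/(1 - y 0 - y 2)) * x 0 + 1/(1 + y 0 - y 2) * x 1) * (1 - y 0)
            + (-(1/(1 - y 1 - y 2)) * x 2) * (1 - y 1)
            + (1/y 2 + ((-(1/(1 - y 0 - y 2)) - 1/y 2) * x 0 + (-(1/(1 + y 0 - y 2)) - 1/y 2) * x 1
              + (-(1/(1 - y 1 - y 2)) - 1/y 2) * x 2)) * (0 - y 2)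
            = -1 + x 1 * (2/(1 + y 0 - y 2)) := by
          field_simp
          ring
        rw [key]
        have : 0 ≤ x 1 * (2/(1 + y 0 - y 2)) := by positivity
        linarith
      · have key : (-(1/(1 - y 0 - y 2)) * x 0 + 1/(1 + y 0 - y 2) * x 1) * (-1 - y 0)
            + (-(1/(1 - y 1 - y 2)) * x 2) * (1 - y 1)
            + (1/y 2 + ((-(1/(1 - y 0 - y 2)) - 1/y 2) * x 0 + (-(1/(1 + y 0 - y 2)) - 1/y 2) * x 1
              + (-(1/(1 - y 1 - y 2)) - 1/y 2) * x 2)) * (0 - y 2)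
            = -1 + x 0 * (2/(1 - y 0 - y 2)) := by
          field_simp
          ring
        rw [key]
        have : 0 ≤ x 0 * (2/(1 - y 0 - y 2)) := by positivity
        linarith
      · have key : (-(1/(1 - y 0 - y 2)) * x 0 + 1/(1 + y 0 - y 2) * x 1) * (-1 - y 0)
            + (-(1/(1 - y 1 - y 2)) * x 2) * (-1 - y 1)
            + (1/y 2 + ((-(1/(1 - y 0 - y 2)) - 1/y 2) * x 0 + (-(1/(1 + y 0 - y 2)) - 1/y 2) * x 1
              + (-(1/(1 - y 1 - y 2)) - 1/y 2) * x 2)) * (0 - y 2)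
            = -1 + x 0 * (2/(1 - y 0 - y 2)) + x 2 * (2/(1 - y 1 - y 2)) := by
          field_simp
          ring
        rw [key]
        have h1 : 0 ≤ x 0 * (2/(1 - y 0 - y 2)) := by positivity
        have h2 : 0 ≤ x 2 * (2/(1 - y 1 - y 2)) := by positivity
        linarith
      · have key : (-(1/(1 - y 0 - y 2)) * x 0 + 1/(1 + y 0 - y 2) * x 1) * (1 - y 0)
            + (-(1/(1 - y 1 - y 2)) * x 2) * (-1 - y 1)
            + (1/y 2 + ((-(1/(1 - y 0 - y 2)) - 1/y 2) * x 0 + (-(1/(1 + y 0 - y 2)) - 1/y 2) * x 1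
              + (-(1/(1 - y 1 - y 2)) - 1/y 2) * x 2)) * (0 - y 2)
            = -1 + x 1 * (2/(1 + y 0 - y 2)) + x 2 * (2/(1 - y 1 - y 2)) := by
          field_simp
          ring
        rw [key]
        have h1 : 0 ≤ x 1 * (2/(1 + y 0 - y 2)) := by positivity
        have h2 : 0 ≤ x 2 * (2/(1 - y 1 - y 2)) := by positivity
        linarith
      · have : 0 ≤ (1/(1 - y 1 - y 2)) * x 2 := by positivity
        linarith
  have hT2 : {u : Fin 3 → ℝ |
      ((-1 ≤ u 0 * (0 - y 0) + u 1 * (0 - y 1) + u 2 * (1 - y 2)) ∧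
      (-1 ≤ u 0 * (1 - y 0) + u 1 * (1 - y 1) + u 2 * (0 - y 2)) ∧
      (-1 ≤ u 0 * (-1 - y 0) + u 1 * (1 - y 1) + u 2 * (0 - y 2)) ∧
      (-1 ≤ u 0 * (-1 - y 0) + u 1 * (-1 - y 1) + u 2 * (0 - y 2)) ∧
      (-1 ≤ u 0 * (1 - y 0) + u 1 * (-1 - y 1) + u 2 * (0 - y 2))) ∧ 0 ≤ u 1}
    = (fun x : Fin 3 → ℝ => ![(0:ℝ),0,1/y 2] +
        (Matrix.of ![![-(1/(1 - y 0 - y 2)), 1/(1 + y 0 - y 2), 0],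
          ![0, 0, 1/(1 + y 1 - y 2)],
          ![-(1/(1 - y 0 - y 2)) - 1/y 2, -(1/(1 + y 0 - y 2)) - 1/y 2,
            -(1/(1 + y 1 - y 2)) - 1/y 2]]).mulVec x) ''
      {x : Fin 3 → ℝ | 0 ≤ x 0 ∧ 0 ≤ x 1 ∧ 0 ≤ x 2 ∧ x 0 + x 1 + x 2 ≤ 1} := by
    ext u
    simp only [Set.mem_setOf_eq, Set.mem_image, hmv2]
    constructor
    · rintro ⟨⟨h0, h1, h2, h3, h4⟩, ht⟩
      refine ⟨![((1 - y 0 - y 2)/2) * (1 + (u 0 * (-1 - y 0) + u 1 * (-1 - y 1) + u 2 * (0 - y 2))),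
        ((1 + y 0 - y 2)/2) * (1 + (u 0 * (1 - y 0) + u 1 * (-1 - y 1) + u 2 * (0 - y 2))),
        (1 + y 1 - y 2) * u 1], ⟨?_, ?_, ?_, ?_⟩, ?_⟩
      · simp only [Matrix.cons_val_zero]
        nlinarith
      · simp only [Matrix.cons_val_one, Matrix.head_cons, Matrix.cons_val_zero]
        nlinarith
      · simp only [Matrix.cons_val_two, Matrix.tail_cons, Matrix.head_cons]
        nlinarith
      · simp only [Matrix.cons_val_zero, Matrix.cons_val_one, Matrix.head_cons,
          Matrix.cons_val_two, Matrix.tail_cons]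
        nlinarith [mul_nonneg hc.le (by linarith :
          (0:ℝ) ≤ 1 + (u 0 * (0 - y 0) + u 1 * (0 - y 1) + u 2 * (1 - y 2)))]
      · funext i
        fin_cases i
        · show _ = u 0
          simp only [Matrix.cons_val_zero, Matrix.cons_val_one, Matrix.head_cons,
            Matrix.cons_val_two, Matrix.tail_cons, Fin.reduceFinMk]
          field_simp
          ring
        · show _ = u 1
          simp only [Matrix.cons_val_zero, Matrix.cons_val_one, Matrix.head_cons,
            Matrix.cons_val_two, Matrix.tail_cons, Fin.reduceFinMk]
          field_simp
          try ring
        · show _ = u 2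
          simp only [Matrix.cons_val_zero, Matrix.cons_val_one, Matrix.head_cons,
            Matrix.cons_val_two, Matrix.tail_cons, Fin.reduceFinMk]
          field_simp
          ring
    · rintro ⟨x, ⟨hx0, hx1, hx2, hxs⟩, rfl⟩
      simp only [Matrix.cons_val_zero, Matrix.cons_val_one, Matrix.head_cons,
        Matrix.cons_val_two, Matrix.tail_cons]
      refine ⟨⟨?_, ?_, ?_, ?_, ?_⟩, ?_⟩
      · have key : (-(1/(1 - y 0 - y 2)) * x 0 + 1/(1 + y 0 - y 2) * x 1) * (0 - y 0)
            + (1/(1 + y 1 - y 2) * x 2) * (0 - y 1)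
            + (1/y 2 + ((-(1/(1 - y 0 - y 2)) - 1/y 2) * x 0 + (-(1/(1 + y 0 - y 2)) - 1/y 2) * x 1
              + (-(1/(1 + y 1 - y 2)) - 1/y 2) * x 2)) * (1 - y 2)
            = -1 + (1 - x 0 - x 1 - x 2) * (1/y 2) := by
          field_simp
          ring
        rw [key]
        have : 0 < 1/y 2 := by positivity
        nlinarith
      · have key : (-(1/(1 - y 0 - y 2)) * x 0 + 1/(1 + y 0 - y 2) * x 1) * (1 - y 0)
            + (1/(1 + y 1 - y 2) * x 2) * (1 - y 1)
            + (1/y 2 + ((-(1/(1 - y 0 - y 2)) - 1/y 2) * x 0 + (-(1/(1 + y 0 - y 2)) - 1/y 2) * x 1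
              + (-(1/(1 + y 1 - y 2)) - 1/y 2) * x 2)) * (0 - y 2)
            = -1 + x 1 * (2/(1 + y 0 - y 2)) + x 2 * (2/(1 + y 1 - y 2)) := by
          field_simp
          ring
        rw [key]
        have h1 : 0 ≤ x 1 * (2/(1 + y 0 - y 2)) := by positivity
        have h2 : 0 ≤ x 2 * (2/(1 + y 1 - y 2)) := by positivity
        linarith
      · have key : (-(1/(1 - y 0 - y 2)) * x 0 + 1/(1 + y 0 - y 2) * x 1) * (-1 - y 0)
            + (1/(1 + y 1 - y 2) * x 2) * (1 - y 1)
            + (1/y 2 + ((-(1/(1 - y 0 - y 2)) - 1/y 2) * x 0 + (-(1/(1 + y 0 - y 2)) - 1/y 2) * x 1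
              + (-(1/(1 + y 1 - y 2)) - 1/y 2) * x 2)) * (0 - y 2)
            = -1 + x 0 * (2/(1 - y 0 - y 2)) + x 2 * (2/(1 + y 1 - y 2)) := by
          field_simp
          ring
        rw [key]
        have h1 : 0 ≤ x 0 * (2/(1 - y 0 - y 2)) := by positivity
        have h2 : 0 ≤ x 2 * (2/(1 + y 1 - y 2)) := by positivity
        linarith
      · have key : (-(1/(1 - y 0 - y 2)) * x 0 + 1/(1 + y 0 - y 2) * x 1) * (-1 - y 0)
            + (1/(1 + y 1 - y 2) * x 2) * (-1 - y 1)
            + (1/y 2 + ((-(1/(1 - y 0 - y 2)) - 1/y 2) * x 0 + (-(1/(1 + y 0 - y 2)) - 1/y 2) * x 1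
              + (-(1/(1 + y 1 - y 2)) - 1/y 2) * x 2)) * (0 - y 2)
            = -1 + x 0 * (2/(1 - y 0 - y 2)) := by
          field_simp
          ring
        rw [key]
        have h1 : 0 ≤ x 0 * (2/(1 - y 0 - y 2)) := by positivity
        linarith
      · have key : (-(1/(1 - y 0 - y 2)) * x 0 + 1/(1 + y 0 - y 2) * x 1) * (1 - y 0)
            + (1/(1 + y 1 - y 2) * x 2) * (-1 - y 1)
            + (1/y 2 + ((-(1/(1 - y 0 - y 2)) - 1/y 2) * x 0 + (-(1/(1 + y 0 - y 2)) - 1/y 2) * x 1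
              + (-(1/(1 + y 1 - y 2)) - 1/y 2) * x 2)) * (0 - y 2)
            = -1 + x 1 * (2/(1 + y 0 - y 2)) := by
          field_simp
          ring
        rw [key]
        have h1 : 0 ≤ x 1 * (2/(1 + y 0 - y 2)) := by positivity
        linarith
      · positivity
  -- splitting
  have hsplit : {u : Fin 3 → ℝ |
        (-1 ≤ u 0 * (0 - y 0) + u 1 * (0 - y 1) + u 2 * (1 - y 2)) ∧
        (-1 ≤ u 0 * (1 - y 0) + u 1 * (1 - y 1) + u 2 * (0 - y 2)) ∧
        (-1 ≤ u 0 * (-1 - y 0) + u 1 * (1 - y 1) + u 2 * (0 - y 2)) ∧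
        (-1 ≤ u 0 * (-1 - y 0) + u 1 * (-1 - y 1) + u 2 * (0 - y 2)) ∧
        (-1 ≤ u 0 * (1 - y 0) + u 1 * (-1 - y 1) + u 2 * (0 - y 2))}
      = {u : Fin 3 → ℝ |
        ((-1 ≤ u 0 * (0 - y 0) + u 1 * (0 - y 1) + u 2 * (1 - y 2)) ∧
        (-1 ≤ u 0 * (1 - y 0) + u 1 * (1 - y 1) + u 2 * (0 - y 2)) ∧
        (-1 ≤ u 0 * (-1 - y 0) + u 1 * (1 - y 1) + u 2 * (0 - y 2)) ∧
        (-1 ≤ u 0 * (-1 - y 0) + u 1 * (-1 - y 1) + u 2 * (0 - y 2)) ∧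
        (-1 ≤ u 0 * (1 - y 0) + u 1 * (-1 - y 1) + u 2 * (0 - y 2))) ∧ u 1 ≤ 0}
      ∪ {u : Fin 3 → ℝ |
        ((-1 ≤ u 0 * (0 - y 0) + u 1 * (0 - y 1) + u 2 * (1 - y 2)) ∧
        (-1 ≤ u 0 * (1 - y 0) + u 1 * (1 - y 1) + u 2 * (0 - y 2)) ∧
        (-1 ≤ u 0 * (-1 - y 0) + u 1 * (1 - y 1) + u 2 * (0 - y 2)) ∧
        (-1 ≤ u 0 * (-1 - y 0) + u 1 * (-1 - y 1) + u 2 * (0 - y 2)) ∧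
        (-1 ≤ u 0 * (1 - y 0) + u 1 * (-1 - y 1) + u 2 * (0 - y 2))) ∧ 0 ≤ u 1} := by
    ext u
    simp only [Set.mem_setOf_eq, Set.mem_union]
    constructor
    · intro h
      rcases le_total (u 1) 0 with h'|h'
      · exact Or.inl ⟨h, h'⟩
      · exact Or.inr ⟨h, h'⟩
    · rintro (⟨h, _⟩|⟨h, _⟩) <;> exact h
  -- measurability of the second piece
  have hmeas2 : MeasurableSet {u : Fin 3 → ℝ |
      ((-1 ≤ u 0 * (0 - y 0) + u 1 * (0 - y 1) + u 2 * (1 - y 2)) ∧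
      (-1 ≤ u 0 * (1 - y 0) + u 1 * (1 - y 1) + u 2 * (0 - y 2)) ∧
      (-1 ≤ u 0 * (-1 - y 0) + u 1 * (1 - y 1) + u 2 * (0 - y 2)) ∧
      (-1 ≤ u 0 * (-1 - y 0) + u 1 * (-1 - y 1) + u 2 * (0 - y 2)) ∧
      (-1 ≤ u 0 * (1 - y 0) + u 1 * (-1 - y 1) + u 2 * (0 - y 2))) ∧ 0 ≤ u 1} := by
    have hlin : ∀ r0 r1 r2 : ℝ, Measurable fun u : Fin 3 → ℝ =>
        u 0 * r0 + u 1 * r1 + u 2 * r2 := by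
      intro r0 r1 r2
      fun_prop
    refine MeasurableSet.inter (MeasurableSet.inter ?_ (MeasurableSet.inter ?_
      (MeasurableSet.inter ?_ (MeasurableSet.inter ?_ ?_))))
      (measurableSet_le measurable_const (measurable_pi_apply 1)) <;>
      exact measurableSet_le measurable_const (hlin _ _ _)
  -- wall has measure zero
  have hwall0 : volume {u : Fin 3 → ℝ | u 1 = 0} = 0 := by
    rw [MeasureTheory.volume_pi]
    exact Measure.pi_hyperplane _ 1 0
  have hdisj : volume ({u : Fin 3 → ℝ |
      ((-1 ≤ u 0 * (0 - y 0) + u 1 * (0 - y 1) + u 2 * (1 - y 2)) ∧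
      (-1 ≤ u 0 * (1 - y 0) + u 1 * (1 - y 1) + u 2 * (0 - y 2)) ∧
      (-1 ≤ u 0 * (-1 - y 0) + u 1 * (1 - y 1) + u 2 * (0 - y 2)) ∧
      (-1 ≤ u 0 * (-1 - y 0) + u 1 * (-1 - y 1) + u 2 * (0 - y 2)) ∧
      (-1 ≤ u 0 * (1 - y 0) + u 1 * (-1 - y 1) + u 2 * (0 - y 2))) ∧ u 1 ≤ 0} ∩
      {u : Fin 3 → ℝ |
      ((-1 ≤ u 0 * (0 - y 0) + u 1 * (0 - y 1) + u 2 * (1 - y 2)) ∧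
      (-1 ≤ u 0 * (1 - y 0) + u 1 * (1 - y 1) + u 2 * (0 - y 2)) ∧
      (-1 ≤ u 0 * (-1 - y 0) + u 1 * (1 - y 1) + u 2 * (0 - y 2)) ∧
      (-1 ≤ u 0 * (-1 - y 0) + u 1 * (-1 - y 1) + u 2 * (0 - y 2)) ∧
      (-1 ≤ u 0 * (1 - y 0) + u 1 * (-1 - y 1) + u 2 * (0 - y 2))) ∧ 0 ≤ u 1}) = 0 := by
    refine measure_mono_null ?_ hwall0
    rintro u ⟨⟨_, h1⟩, ⟨_, h2⟩⟩
    exact le_antisymm h1 h2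
  -- compute
  rw [hQ, hsplit, measure_union₀ hmeas2.nullMeasurableSet hdisj, hT1, hT2,
    volAff', volAff', volS']
  have hdet1 : (Matrix.of ![![-(1/(1 - y 0 - y 2)), 1/(1 + y 0 - y 2), 0],
      ![0, 0, -(1/(1 - y 1 - y 2))],
      ![-(1/(1 - y 0 - y 2)) - 1/y 2, -(1/(1 + y 0 - y 2)) - 1/y 2,
        -(1/(1 - y 1 - y 2)) - 1/y 2]]).det
      = 2/(y 2 * (1 - y 0 - y 2) * (1 + y 0 - y 2) * (1 - y 1 - y 2)) := by
    rw [Matrix.det_fin_three]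
    simp only [Matrix.of_apply, Matrix.cons_val_zero, Matrix.cons_val_one, Matrix.head_cons,
      Matrix.cons_val_two, Matrix.tail_cons, Matrix.head_fin_const]
    field_simp
    ring
  have hdet2 : (Matrix.of ![![-(1/(1 - y 0 - y 2)), 1/(1 + y 0 - y 2), 0],
      ![0, 0, 1/(1 + y 1 - y 2)],
      ![-(1/(1 - y 0 - y 2)) - 1/y 2, -(1/(1 + y 0 - y 2)) - 1/y 2,
        -(1/(1 + y 1 - y 2)) - 1/y 2]]).det
      = -(2/(y 2 * (1 - y 0 - y 2) * (1 + y 0 - y 2) * (1 + y 1 - y 2))) := by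
    rw [Matrix.det_fin_three]
    simp only [Matrix.of_apply, Matrix.cons_val_zero, Matrix.cons_val_one, Matrix.head_cons,
      Matrix.cons_val_two, Matrix.tail_cons, Matrix.head_fin_const]
    field_simp
    ring
  rw [hdet1, hdet2, abs_of_pos (by positivity), abs_neg, abs_of_pos (by positivity)]
  rw [← ENNReal.ofReal_mul (by positivity), ← ENNReal.ofReal_mul (by positivity),
    ← ENNReal.ofReal_add (by positivity) (by positivity),
    ENNReal.toReal_ofReal (by positivity)]
  have h6 : (Nat.factorial 3 : ℝ) = 6 := by norm_num [Nat.factorial]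
  rw [h6]
  have hw1 : y 1 - y 0 ≠ 0 := sub_ne_zero.mpr (Ne.symm hwall)
  have hw2 : y 0 - y 1 ≠ 0 := sub_ne_zero.mpr hwall
  have hb2 : y 0 - y 2 + 1 ≠ 0 := by intro h; apply hb'; linarith
  have hd2 : y 1 - y 2 + 1 ≠ 0 := by intro h; apply hd'; linarith
  field_simp
  ring
end

section
/- (Universal adjoint vanishes on the translated origin) For a d-dimensional simple polytope P with minimal facet matrix U ∈ ℝ^{n×d}, the universal adjoint Adj_P(x) = ∑_{v∈V(P)} |det U_v| · ∏_{F ∌ v} x_F satisfies Adj_P(U·y) = 0 for all y ∈ ℝᵈ. -/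
open Matrix Finset

/-- Row expansion of the determinant against a covector `c` with `y ⬝ᵥ c = 1`. -/
lemma det_expand {d : ℕ} (A : Matrix (Fin d) (Fin d) ℝ) (y c : Fin d → ℝ)
    (hyc : y ⬝ᵥ c = 1) :
    A.det = ∑ k, (A k ⬝ᵥ y) * (A.updateRow k c).det := by
  have h1 : ∀ k, (A.updateRow k c).det = cramer Aᵀ c k := by
    intro k
    rw [cramer_apply, updateCol_transpose, det_transpose]
  calc A.det = y ⬝ᵥ (A.det • c) := by
        rw [dotProduct_smul, hyc, smul_eq_mul, mul_one]
    _ = y ⬝ᵥ (Aᵀ *ᵥ cramer Aᵀ c) := by rw [mulVec_cramer, det_transpose]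
    _ = (A *ᵥ y) ⬝ᵥ cramer Aᵀ c := by
        rw [dotProduct_mulVec, vecMul_transpose]
    _ = ∑ k, (A k ⬝ᵥ y) * (A.updateRow k c).det := by
        simp [dotProduct, mulVec, h1]



lemma det_update_sign {d : ℕ} (A : Matrix (Fin d) (Fin d) ℝ) (k : Fin d)
    (w b : Fin d → ℝ) (hdet : A.det ≠ 0)
    (h0 : ∀ j, j ≠ k → A j ⬝ᵥ w = 0) (hak : 0 < A k ⬝ᵥ w) (hb : b ⬝ᵥ w < 0) :
    (A.updateRow k b).det * A.det < 0 := by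
  classical
  set B := A.updateRow k w with hB
  have hw0 : w ≠ 0 := by
    intro h; rw [h, dotProduct_zero] at hak; exact lt_irrefl _ hak
  have hww : 0 < w ⬝ᵥ w := by
    have := dotProduct_self_star_pos_iff (R := ℝ) (v := w)
    simpa [star_trivial] using this.mpr hw0
  have hBrow : ∀ j, j ≠ k → B j = A j := fun j hj => A.updateRow_ne hj
  have hBk : B k = w := A.updateRow_self
  -- B is invertible
  have hdetB : B.det ≠ 0 := by
    intro h
    obtain ⟨g, hg0, hgB⟩ := (Matrix.exists_vecMul_eq_zero_iff (M := B)).mpr h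
    have hgw : (g ᵥ* B) ⬝ᵥ w = 0 := by rw [hgB, zero_dotProduct]
    have hexp : (g ᵥ* B) ⬝ᵥ w = ∑ j, g j * (B j ⬝ᵥ w) := by
      simp [vecMul, dotProduct, Finset.sum_mul, Finset.mul_sum, mul_assoc]
      exact Finset.sum_comm
    have hsum : ∑ j, g j * (B j ⬝ᵥ w) = g k * (w ⬝ᵥ w) := by
      rw [Finset.sum_eq_single k]
      · rw [hBk]
      · intro j _ hj; rw [hBrow j hj, h0 j hj, mul_zero]
      · simp
    have hgk : g k = 0 := by
      have : g k * (w ⬝ᵥ w) = 0 := by rw [← hsum, ← hexp, hgw]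
      exact (mul_eq_zero.mp this).resolve_right (ne_of_gt hww)
    have hgA : g ᵥ* A = 0 := by
      funext i
      have h1 : (g ᵥ* A) i = ∑ j, g j * A j i := by
        simp [vecMul, dotProduct]
      have h2 : (g ᵥ* B) i = ∑ j, g j * B j i := by
        simp [vecMul, dotProduct]
      have : ∑ j, g j * A j i = ∑ j, g j * B j i := by
        apply Finset.sum_congr rfl
        intro j _
        by_cases hj : j = k
        · subst hj; rw [hgk, zero_mul, zero_mul]
        · rw [hBrow j hj]
      rw [h1, this, ← h2, hgB]
    obtain ⟨g', hg', hgA'⟩ : ∃ v, v ≠ 0 ∧ v ᵥ* A = 0 := ⟨g, hg0, hgA⟩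
    exact hdet ((Matrix.exists_vecMul_eq_zero_iff (M := A)).mp ⟨g', hg', hgA'⟩)
  -- express any vector in terms of the rows of B
  have key : ∀ x : Fin d → ℝ,
      (A.updateRow k x).det = (x ᵥ* B⁻¹) k * B.det ∧
      x ⬝ᵥ w = (x ᵥ* B⁻¹) k * (w ⬝ᵥ w) := by
    intro x
    set g : Fin d → ℝ := x ᵥ* B⁻¹ with hg
    have hx : x = g ᵥ* B := by
      rw [hg, vecMul_vecMul, Matrix.nonsing_inv_mul B (isUnit_iff_ne_zero.mpr hdetB),
        vecMul_one]
    have hxsum : x = ∑ j, g j • B j := by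
      rw [hx]; funext i; simp [vecMul, dotProduct, Finset.sum_apply]
    have hcr : ∀ v : Fin d → ℝ, (A.updateRow k v).det = cramer Aᵀ v k := by
      intro v; rw [cramer_apply, updateCol_transpose, det_transpose]
    constructor
    · rw [hcr, hxsum, map_sum]
      have : ∀ j, (cramer Aᵀ (g j • B j)) k = g j * (A.updateRow k (B j)).det := by
        intro j; rw [LinearMap.map_smul, hcr]; simp
      rw [Finset.sum_apply, Finset.sum_eq_single k]
      · rw [this k, hBk]
      · intro j _ hj
        rw [this j, hBrow j hj, Matrix.det_updateRow_eq_zero hj, mul_zero]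
      · simp
    · rw [hxsum]
      have : (∑ j, g j • B j) ⬝ᵥ w = ∑ j, g j * (B j ⬝ᵥ w) := by
        simp only [dotProduct, Finset.sum_apply, Pi.smul_apply, smul_eq_mul, Finset.sum_mul]
        rw [Finset.sum_comm]
        simp [Finset.mul_sum, mul_assoc]
      rw [this, Finset.sum_eq_single k]
      · rw [hBk]
      · intro j _ hj; rw [hBrow j hj, h0 j hj, mul_zero]
      · simp
  obtain ⟨hdb, hbw⟩ := key b
  obtain ⟨hda, haw⟩ := key (A k)
  have hAA : (A.updateRow k (A k)).det = A.det := by rw [A.updateRow_eq_self k]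
  have hgk : (b ᵥ* B⁻¹) k < 0 := by nlinarith [hbw, hww, hb]
  have hhk : 0 < (A k ᵥ* B⁻¹) k := by nlinarith [haw, hww, hak]
  have hdB2 : 0 < B.det * B.det := mul_self_pos.mpr hdetB
  rw [hdb, ← hAA, hda]
  have heq : (b ᵥ* B⁻¹) k * B.det * ((A k ᵥ* B⁻¹) k * B.det)
      = ((b ᵥ* B⁻¹) k * (A k ᵥ* B⁻¹) k) * (B.det * B.det) := by ring
  rw [heq]
  exact mul_neg_of_neg_of_pos (mul_neg_of_neg_of_pos hgk hhk) hdB2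


/-- At an extreme point of the polyhedron, the active constraint normals span:
any vector orthogonal to all active normals is zero. -/
lemma vertex_span {d n : ℕ} (U : Fin n → Fin d → ℝ) (z : Fin n → ℝ)
    (v : Fin d → ℝ)
    (hv : v ∈ Set.extremePoints ℝ {y : Fin d → ℝ | ∀ i, 0 ≤ U i ⬝ᵥ y + z i})
    (w : Fin d → ℝ) (hw : ∀ i, U i ⬝ᵥ v + z i = 0 → U i ⬝ᵥ w = 0) : w = 0 := by
  classical
  obtain ⟨hvP, hext⟩ := hv
  -- a positive ε keeping v ± ε w in P
  obtain ⟨ε, hε, hεle⟩ : ∃ ε > (0:ℝ), ∀ i, 0 < U i ⬝ᵥ v + z i →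
      ε * (|U i ⬝ᵥ w| + 1) ≤ U i ⬝ᵥ v + z i := by
    set F : Finset (Fin n) := univ.filter (fun i => 0 < U i ⬝ᵥ v + z i) with hF
    by_cases hne : F.Nonempty
    · refine ⟨F.inf' hne (fun i => (U i ⬝ᵥ v + z i) / (|U i ⬝ᵥ w| + 1)), ?_, ?_⟩
      · rw [gt_iff_lt, Finset.lt_inf'_iff]
        intro i hi
        have hipos : 0 < U i ⬝ᵥ v + z i := (Finset.mem_filter.mp hi).2
        have : (0:ℝ) < |U i ⬝ᵥ w| + 1 := by positivity
        positivity
      · intro i hi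
        have hiF : i ∈ F := Finset.mem_filter.mpr ⟨Finset.mem_univ i, hi⟩
        have h1 : F.inf' hne (fun i => (U i ⬝ᵥ v + z i) / (|U i ⬝ᵥ w| + 1))
            ≤ (U i ⬝ᵥ v + z i) / (|U i ⬝ᵥ w| + 1) := Finset.inf'_le _ hiF
        have h2 : (0:ℝ) < |U i ⬝ᵥ w| + 1 := by positivity
        calc F.inf' hne (fun i => (U i ⬝ᵥ v + z i) / (|U i ⬝ᵥ w| + 1)) * (|U i ⬝ᵥ w| + 1)
            ≤ ((U i ⬝ᵥ v + z i) / (|U i ⬝ᵥ w| + 1)) * (|U i ⬝ᵥ w| + 1) := by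
              exact mul_le_mul_of_nonneg_right h1 (le_of_lt h2)
          _ = U i ⬝ᵥ v + z i := by field_simp
    · exact ⟨1, one_pos, fun i hi => absurd (Finset.mem_filter.mpr ⟨Finset.mem_univ i, hi⟩) (by
        intro h; exact hne ⟨i, h⟩)⟩
  have hmem : ∀ (s : ℝ), |s| ≤ ε → v + s • w ∈
      {y : Fin d → ℝ | ∀ i, 0 ≤ U i ⬝ᵥ y + z i} := by
    intro s hs i
    have hcalc : U i ⬝ᵥ (v + s • w) + z i = (U i ⬝ᵥ v + z i) + s * (U i ⬝ᵥ w) := by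
      rw [dotProduct_add, dotProduct_smul]; ring_nf
    rw [hcalc]
    rcases eq_or_lt_of_le (hvP i) with h | h
    · rw [hw i h.symm, mul_zero, ← h]; simp
    · have h1 : ε * (|U i ⬝ᵥ w| + 1) ≤ U i ⬝ᵥ v + z i := hεle i h
      have h2 : |s * (U i ⬝ᵥ w)| ≤ ε * |U i ⬝ᵥ w| := by
        rw [abs_mul]
        exact mul_le_mul_of_nonneg_right hs (abs_nonneg _)
      have h3 : -(s * (U i ⬝ᵥ w)) ≤ ε * |U i ⬝ᵥ w| := (abs_le.mp h2).1 |> neg_le.mp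
      nlinarith [abs_nonneg (U i ⬝ᵥ w), abs_le.mp h2]
  have hm : v - ε • w ∈ {y : Fin d → ℝ | ∀ i, 0 ≤ U i ⬝ᵥ y + z i} := by
    have := hmem (-ε) (by rw [abs_neg, abs_of_pos hε])
    rwa [neg_smul, ← sub_eq_add_neg] at this
  have hp : v + ε • w ∈ {y : Fin d → ℝ | ∀ i, 0 ≤ U i ⬝ᵥ y + z i} := hmem ε (by rw [abs_of_pos hε])
  have hseg : v ∈ openSegment ℝ (v - ε • w) (v + ε • w) := by
    refine ⟨1/2, 1/2, by norm_num, by norm_num, by norm_num, ?_⟩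
    module
  have := hext hm hp hseg
  have hεw : ε • w = 0 := by
    have h := sub_eq_self.mp this
    exact h
  rcases smul_eq_zero.mp hεw with h | h
  · exact absurd h (ne_of_gt hε)
  · exact h

lemma pos_eps {n : ℕ} (f g : Fin n → ℝ) :
    ∃ ε > (0:ℝ), ∀ i, 0 < f i → ε * (|g i| + 1) ≤ f i := by
  classical
  set F : Finset (Fin n) := univ.filter (fun i => 0 < f i) with hF
  by_cases hne : F.Nonempty
  · refine ⟨F.inf' hne (fun i => f i / (|g i| + 1)), ?_, ?_⟩
    · rw [gt_iff_lt, Finset.lt_inf'_iff]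
      intro i hi
      have hipos : 0 < f i := (Finset.mem_filter.mp hi).2
      have : (0:ℝ) < |g i| + 1 := by positivity
      positivity
    · intro i hi
      have hiF : i ∈ F := Finset.mem_filter.mpr ⟨Finset.mem_univ i, hi⟩
      have h1 : F.inf' hne (fun i => f i / (|g i| + 1)) ≤ f i / (|g i| + 1) :=
        Finset.inf'_le _ hiF
      have h2 : (0:ℝ) < |g i| + 1 := by positivity
      calc F.inf' hne (fun i => f i / (|g i| + 1)) * (|g i| + 1)
          ≤ (f i / (|g i| + 1)) * (|g i| + 1) :=
            mul_le_mul_of_nonneg_right h1 (le_of_lt h2)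
        _ = f i := by field_simp
  · exact ⟨1, one_pos, fun i hi =>
      absurd (Finset.mem_filter.mpr ⟨Finset.mem_univ i, hi⟩) (fun h => hne ⟨i, h⟩)⟩

lemma dot_continuous {d : ℕ} (u : Fin d → ℝ) : Continuous fun y : Fin d → ℝ => u ⬝ᵥ y := by
  unfold dotProduct
  exact continuous_finset_sum _ fun j _ => continuous_const.mul (continuous_apply j)

/-- The edge lemma: walking from a vertex `v` of the polytope along the edge determined by
dropping the active constraint `a`, we reach a unique second vertex `v'`. -/
lemma edge_lemma {d n : ℕ} (U : Fin n → Fin d → ℝ) (z : Fin n → ℝ)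
    (P : Set (Fin d → ℝ))
    (hP : P = {y : Fin d → ℝ | ∀ i : Fin n, 0 ≤ U i ⬝ᵥ y + z i})
    (hbdd : Bornology.IsBounded P)
    (V : Finset (Fin d → ℝ)) (hV : (V : Set (Fin d → ℝ)) = Set.extremePoints ℝ P)
    (S : (Fin d → ℝ) → Finset (Fin n))
    (hS : ∀ v : Fin d → ℝ, S v = Finset.univ.filter fun i => U i ⬝ᵥ v + z i = 0)
    (hsimple : ∀ v ∈ V, (S v).card = d)
    (v : Fin d → ℝ) (hv : v ∈ V) (a : Fin n) (ha : a ∈ S v)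
    (w₀ : Fin d → ℝ)
    (hw₀a : U a ⬝ᵥ w₀ = 1)
    (hw₀T : ∀ t ∈ S v, t ≠ a → U t ⬝ᵥ w₀ = 0) :
    ∃ v' b, v' ∈ V ∧ v' ≠ v ∧ b ∉ S v ∧ S v' = insert b ((S v).erase a) ∧
      U b ⬝ᵥ w₀ < 0 ∧
      ∀ u ∈ V, u ≠ v → (S v).erase a ⊆ S u → u = v' := by
  classical
  have hSmem : ∀ p (i : Fin n), i ∈ S p ↔ U i ⬝ᵥ p + z i = 0 := by
    intro p i; rw [hS]; simp
  have hvE : v ∈ Set.extremePoints ℝ P := by rw [← hV]; exact_mod_cast hv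
  have hvP : v ∈ P := extremePoints_subset hvE
  have hPge : ∀ p ∈ P, ∀ i, 0 ≤ U i ⬝ᵥ p + z i := by
    intro p hp i; rw [hP] at hp; exact hp i
  have hspan : ∀ x : Fin d → ℝ, (∀ i ∈ S v, U i ⬝ᵥ x = 0) → x = 0 := by
    intro x hx
    refine vertex_span U z v (by rw [hP] at hvE; exact hvE) x ?_
    intro i hi
    exact hx i ((hSmem v i).mpr hi)
  have hw₀ : w₀ ≠ 0 := by
    intro h; rw [h, dotProduct_zero] at hw₀a; norm_num at hw₀a
  have hdot : ∀ (i : Fin n) (s : ℝ) (p : Fin d → ℝ),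
      U i ⬝ᵥ (p + s • w₀) + z i = (U i ⬝ᵥ p + z i) + s * (U i ⬝ᵥ w₀) := by
    intro i s p
    rw [dotProduct_add, dotProduct_smul, smul_eq_mul]; ring
  have hla : U a ⬝ᵥ v + z a = 0 := (hSmem v a).mp ha
  -- the line through the edge
  have hlin : ∀ p ∈ P, (∀ t ∈ S v, t ≠ a → U t ⬝ᵥ p + z t = 0) →
      p = v + (U a ⬝ᵥ p + z a) • w₀ ∧ (U a ⬝ᵥ p + z a) ∈ {s : ℝ | v + s • w₀ ∈ P} := by
    intro p hp hact
    have key : p - v - (U a ⬝ᵥ (p - v)) • w₀ = 0 := by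
      apply hspan
      intro i hi
      rw [dotProduct_sub, dotProduct_smul, smul_eq_mul]
      by_cases hia : i = a
      · subst hia; rw [hw₀a]; ring
      · rw [hw₀T i hi hia, dotProduct_sub]
        have h1 : U i ⬝ᵥ p + z i = 0 := hact i hi hia
        have h2 : U i ⬝ᵥ v + z i = 0 := (hSmem v i).mp hi
        ring_nf; linarith
    have hpv : U a ⬝ᵥ (p - v) = U a ⬝ᵥ p + z a := by
      rw [dotProduct_sub]; linarith
    have h3 : p - v = (U a ⬝ᵥ (p - v)) • w₀ := by
      have h4 := key
      rw [sub_eq_zero] at h4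
      exact h4
    have hp' : p = v + (U a ⬝ᵥ p + z a) • w₀ := by
      rw [← hpv]
      calc p = v + (p - v) := by abel
        _ = v + (U a ⬝ᵥ (p - v)) • w₀ := by rw [← h3]
    exact ⟨hp', by simpa [Set.mem_setOf_eq, ← hp'] using hp⟩
  -- the feasible interval L
  set L : Set ℝ := {s : ℝ | v + s • w₀ ∈ P} with hL
  have h0L : (0:ℝ) ∈ L := by simp [hL, hvP]
  have hLnonneg : ∀ s ∈ L, (0:ℝ) ≤ s := by
    intro s hs
    have := hPge _ hs a
    rw [hdot, hla, hw₀a] at this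
    linarith
  have hPclosed : IsClosed P := by
    rw [hP]
    have : {y : Fin d → ℝ | ∀ i : Fin n, 0 ≤ U i ⬝ᵥ y + z i}
        = ⋂ i : Fin n, {y : Fin d → ℝ | 0 ≤ U i ⬝ᵥ y + z i} := by
      ext y; simp
    rw [this]
    exact isClosed_iInter fun i =>
      isClosed_le continuous_const ((dot_continuous (U i)).add continuous_const)
  have hLclosed : IsClosed L := by
    have : Continuous fun s : ℝ => v + s • w₀ :=
      continuous_const.add (continuous_id.smul continuous_const)
    exact hPclosed.preimage this
  obtain ⟨C, hC⟩ := isBounded_iff_forall_norm_le.mp hbdd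
  have hw₀pos : 0 < ‖w₀‖ := norm_pos_iff.mpr hw₀
  have hLsub : L ⊆ Set.Icc 0 ((C + ‖v‖)/‖w₀‖) := by
    intro s hs
    refine ⟨hLnonneg s hs, ?_⟩
    have h1 : ‖v + s • w₀‖ ≤ C := hC _ hs
    have h2 : ‖s • w₀‖ ≤ C + ‖v‖ := by
      calc ‖s • w₀‖ = ‖(v + s • w₀) - v‖ := by congr 1; abel
        _ ≤ ‖v + s • w₀‖ + ‖v‖ := norm_sub_le _ _
        _ ≤ C + ‖v‖ := by linarith
    rw [norm_smul, Real.norm_eq_abs] at h2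
    rw [le_div_iff₀ hw₀pos]
    nlinarith [le_abs_self s, abs_nonneg s]
  have hLbddA : BddAbove L := ⟨(C + ‖v‖)/‖w₀‖, fun s hs => (hLsub hs).2⟩
  have hLcomp : IsCompact L := Metric.isCompact_of_isClosed_isBounded hLclosed
    ((Metric.isBounded_Icc _ _).subset hLsub)
  -- a positive element of L
  obtain ⟨ε, hε, hεle⟩ := pos_eps (fun i => U i ⬝ᵥ v + z i) (fun i => U i ⬝ᵥ w₀)
  have hεL : ε ∈ L := by
    show v + ε • w₀ ∈ P
    rw [hP]
    intro i
    rw [hdot]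
    by_cases hi : i ∈ S v
    · have h0 : U i ⬝ᵥ v + z i = 0 := (hSmem v i).mp hi
      by_cases hia : i = a
      · subst hia; rw [h0, hw₀a]; linarith
      · rw [h0, hw₀T i hi hia]; simp
    · have hpos : 0 < U i ⬝ᵥ v + z i := by
        rcases eq_or_lt_of_le (hPge v hvP i) with h | h
        · exact absurd ((hSmem v i).mpr h.symm) hi
        · exact h
      have h1 := hεle i hpos
      nlinarith [abs_nonneg (U i ⬝ᵥ w₀), le_abs_self (U i ⬝ᵥ w₀), neg_abs_le (U i ⬝ᵥ w₀)]
  set M : ℝ := sSup L with hM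
  have hML : M ∈ L := hLcomp.sSup_mem ⟨0, h0L⟩
  have hεM : ε ≤ M := le_csSup hLbddA hεL
  have hMpos : 0 < M := lt_of_lt_of_le hε hεM
  set v' : Fin d → ℝ := v + M • w₀ with hv'
  have hv'P : v' ∈ P := hML
  have hT' : ∀ t ∈ S v, t ≠ a → U t ⬝ᵥ v' + z t = 0 := by
    intro t ht hta
    rw [hv', hdot, (hSmem v t).mp ht, hw₀T t ht hta]; ring
  have hav' : U a ⬝ᵥ v' + z a = M := by rw [hv', hdot, hla, hw₀a]; ring
  have hanotin : a ∉ S v' := by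
    rw [hSmem, hav']; exact ne_of_gt hMpos
  -- v' is an extreme point
  have hv'E : v' ∈ Set.extremePoints ℝ P := by
    refine ⟨hv'P, ?_⟩
    rintro x₁ hx₁ x₂ hx₂ ⟨θ, η, hθ, hη, hθη, heq⟩
    have haff : ∀ i : Fin n, U i ⬝ᵥ v' + z i
        = θ * (U i ⬝ᵥ x₁ + z i) + η * (U i ⬝ᵥ x₂ + z i) := by
      intro i
      rw [← heq, dotProduct_add, dotProduct_smul, dotProduct_smul, smul_eq_mul, smul_eq_mul]
      linear_combination (-z i) * hθη
    have hactx : ∀ t ∈ S v, t ≠ a → (U t ⬝ᵥ x₁ + z t = 0 ∧ U t ⬝ᵥ x₂ + z t = 0) := by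
      intro t ht hta
      have h0 := hT' t ht hta
      rw [haff t] at h0
      have g1 := hPge _ hx₁ t
      have g2 := hPge _ hx₂ t
      constructor <;> nlinarith
    obtain ⟨hx₁e, hx₁L⟩ := hlin x₁ hx₁ (fun t ht hta => (hactx t ht hta).1)
    obtain ⟨hx₂e, hx₂L⟩ := hlin x₂ hx₂ (fun t ht hta => (hactx t ht hta).2)
    set s₁ : ℝ := U a ⬝ᵥ x₁ + z a with hs₁def
    set s₂ : ℝ := U a ⬝ᵥ x₂ + z a with hs₂def
    have hs₁M : s₁ ≤ M := le_csSup hLbddA hx₁L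
    have hs₂M : s₂ ≤ M := le_csSup hLbddA hx₂L
    have hMs : M = θ * s₁ + η * s₂ := by
      have h5 := haff a
      rw [hav', ← hs₁def, ← hs₂def] at h5
      linarith [h5]
    have hs₁ : s₁ = M := by nlinarith
    have hs₂ : s₂ = M := by nlinarith
    rw [hx₁e, hs₁]
  have hv'V : v' ∈ V := by
    have : v' ∈ (V : Set (Fin d → ℝ)) := by rw [hV]; exact hv'E
    exact_mod_cast this
  have hv'ne : v' ≠ v := by
    intro h
    rw [hv'] at h
    have : M • w₀ = 0 := by
      have := h
      nth_rewrite 2 [← add_zero v] at this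
      exact add_left_cancel this
    rcases smul_eq_zero.mp this with h' | h'
    · exact absurd h' (ne_of_gt hMpos)
    · exact hw₀ h'
  -- extract the new active facet b
  set T : Finset (Fin n) := (S v).erase a with hT
  have hTsub : T ⊆ S v' := by
    intro t ht
    have hta : t ≠ a := Finset.ne_of_mem_erase ht
    have htS : t ∈ S v := Finset.mem_of_mem_erase ht
    exact (hSmem v' t).mpr (hT' t htS hta)
  have hcardT : T.card = d - 1 := by rw [hT, Finset.card_erase_of_mem ha, hsimple v hv]
  have hd1 : 1 ≤ d := by
    have := hsimple v hv
    have : 0 < (S v).card := Finset.card_pos.mpr ⟨a, ha⟩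
    omega
  have hcard1 : (S v' \ T).card = 1 := by
    rw [Finset.card_sdiff_of_subset hTsub, hsimple v' hv'V, hcardT]
    omega
  obtain ⟨b, hb⟩ := Finset.card_eq_one.mp hcard1
  have hbmem : b ∈ S v' := by
    have : b ∈ S v' \ T := by rw [hb]; exact Finset.mem_singleton_self b
    exact (Finset.mem_sdiff.mp this).1
  have hbT : b ∉ T := by
    have : b ∈ S v' \ T := by rw [hb]; exact Finset.mem_singleton_self b
    exact (Finset.mem_sdiff.mp this).2
  have hSv' : S v' = insert b T := by
    have h1 : T ∪ S v' \ T = S v' := Finset.union_sdiff_of_subset hTsub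
    rw [hb] at h1
    rw [← h1, Finset.insert_eq, Finset.union_comm]
  have hba : b ≠ a := fun h => hanotin (h ▸ hbmem)
  have hbS : b ∉ S v := fun h => hbT (Finset.mem_erase.mpr ⟨hba, h⟩)
  have hUb : U b ⬝ᵥ w₀ < 0 := by
    have h0 : U b ⬝ᵥ v' + z b = 0 := (hSmem v' b).mp hbmem
    rw [hv', hdot] at h0
    have h1 : 0 ≤ U b ⬝ᵥ v + z b := hPge v hvP b
    by_contra hge
    push_neg at hge
    have h2 : U b ⬝ᵥ v + z b = 0 := by nlinarith
    exact hbS ((hSmem v b).mpr h2)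
  refine ⟨v', b, hv'V, hv'ne, hbS, hSv', hUb, ?_⟩
  -- uniqueness
  intro u hu hune hTSu
  have huE : u ∈ Set.extremePoints ℝ P := by rw [← hV]; exact_mod_cast hu
  have huP : u ∈ P := extremePoints_subset huE
  obtain ⟨hue, huL⟩ := hlin u huP (fun t ht hta => (hSmem u t).mp (hTSu (Finset.mem_erase.mpr ⟨hta, ht⟩)))
  set s : ℝ := U a ⬝ᵥ u + z a with hs
  have hsM : s ≤ M := le_csSup hLbddA huL
  have hs0 : 0 ≤ s := hLnonneg s huL
  have hsne : s ≠ 0 := by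
    intro h
    rw [h, zero_smul, add_zero] at hue
    exact hune hue
  have hspos : 0 < s := lt_of_le_of_ne hs0 (Ne.symm hsne)
  rcases eq_or_lt_of_le hsM with h | h
  · rw [hue, h]
  · -- u strictly inside the edge: contradicts extremality of u
    exfalso
    have hseg : u ∈ openSegment ℝ v v' := by
      refine ⟨1 - s/M, s/M, ?_, ?_, by ring, ?_⟩
      · have : s/M < 1 := (div_lt_one hMpos).mpr h
        linarith
      · positivity
      · rw [hv', smul_add, smul_smul]
        have : s / M * M = s := div_mul_cancel₀ s (ne_of_gt hMpos)
        rw [this, hue]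
        module
    have := huE.2 hvP hv'P hseg
    exact hune this.symm


section defs
variable {d n : ℕ} {V : Finset (Fin d → ℝ)} {S : (Fin d → ℝ) → Finset (Fin n)}

/-- The vertex matrix. -/
def Amat (U : Fin n → Fin d → ℝ) (e : ∀ v ∈ V, (S v : Finset (Fin n)) ≃ Fin d)
    (v : {x // x ∈ V}) : Matrix (Fin d) (Fin d) ℝ :=
  Matrix.of fun i j : Fin d => U ((e v.1 v.2).symm i : S v.1) j

/-- The facet index in row `k` of the vertex matrix. -/
def av (e : ∀ v ∈ V, (S v : Finset (Fin n)) ≃ Fin d)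
    (v : {x // x ∈ V}) (k : Fin d) : Fin n := ((e v.1 v.2).symm k : Fin n)

lemma Amat_row (U : Fin n → Fin d → ℝ) (e : ∀ v ∈ V, (S v : Finset (Fin n)) ≃ Fin d)
    (v : {x // x ∈ V}) (k : Fin d) : Amat U e v k = U (av e v k) := rfl

lemma av_mem (e : ∀ v ∈ V, (S v : Finset (Fin n)) ≃ Fin d)
    (v : {x // x ∈ V}) (k : Fin d) : av e v k ∈ S v.1 := ((e v.1 v.2).symm k).2

lemma av_apply (e : ∀ v ∈ V, (S v : Finset (Fin n)) ≃ Fin d)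
    (v : {x // x ∈ V}) (i : Fin n) (hi : i ∈ S v.1) :
    av e v (e v.1 v.2 ⟨i, hi⟩) = i := by
  simp [av]

lemma av_symm (e : ∀ v ∈ V, (S v : Finset (Fin n)) ≃ Fin d)
    (v : {x // x ∈ V}) (k : Fin d) :
    (e v.1 v.2).symm k = ⟨av e v k, av_mem e v k⟩ := by
  apply Subtype.ext; rfl

lemma av_inj (e : ∀ v ∈ V, (S v : Finset (Fin n)) ≃ Fin d)
    (v : {x // x ∈ V}) {k k' : Fin d} (h : av e v k = av e v k') : k = k' := by
  have : (e v.1 v.2).symm k = (e v.1 v.2).symm k' := by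
    rw [av_symm, av_symm]; exact Subtype.ext h
  exact (e v.1 v.2).symm.injective this

/-- The direction of the edge obtained by dropping row `k` at vertex `v`. -/
noncomputable def w0 (U : Fin n → Fin d → ℝ)
    (e : ∀ v ∈ V, (S v : Finset (Fin n)) ≃ Fin d)
    (p : {x // x ∈ V} × Fin d) : Fin d → ℝ :=
  (Amat U e p.1)⁻¹ *ᵥ Pi.single p.2 1

/-- The sign of the vertex determinant. -/
noncomputable def sg (U : Fin n → Fin d → ℝ)
    (e : ∀ v ∈ V, (S v : Finset (Fin n)) ≃ Fin d) (v : {x // x ∈ V}) : ℝ :=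
  if (Amat U e v).det < 0 then -1 else 1

lemma abs_eq_sg_mul (U : Fin n → Fin d → ℝ)
    (e : ∀ v ∈ V, (S v : Finset (Fin n)) ≃ Fin d) (v : {x // x ∈ V}) :
    |(Amat U e v).det| = sg U e v * (Amat U e v).det := by
  unfold sg
  split_ifs with h
  · rw [abs_of_neg h]; ring
  · rw [abs_of_nonneg (not_lt.mp h)]; ring

end defs


section main
variable {d n : ℕ}

/-- The universal adjoint of a simple polytope vanishes after the substitution x_F ↦ u_F·y:
Adj_P(U·y) = ∑_{v ∈ V(P)} |det U_v| ∏_{F ∌ v} (u_F·y) = 0 identically in y. -/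
theorem stmt_16 (d n : ℕ) (hd : 0 < d)
    (U : Fin n → Fin d → ℝ) (z : Fin n → ℝ)
    (P : Set (Fin d → ℝ))
    (hP : P = {y : Fin d → ℝ | ∀ i : Fin n, 0 ≤ U i ⬝ᵥ y + z i})
    (hbdd : Bornology.IsBounded P)
    (hfull : (interior P).Nonempty)
    (hmin : ∀ i : Fin n, ∃ y ∈ P, U i ⬝ᵥ y + z i = 0 ∧ ∀ j : Fin n, j ≠ i → 0 < U j ⬝ᵥ y + z j)
    (V : Finset (Fin d → ℝ)) (hV : (V : Set (Fin d → ℝ)) = Set.extremePoints ℝ P)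
    (S : (Fin d → ℝ) → Finset (Fin n))
    (hS : ∀ v : Fin d → ℝ, S v = Finset.univ.filter fun i => U i ⬝ᵥ v + z i = 0)
    (hsimple : ∀ v ∈ V, (S v).card = d)
    (e : ∀ v ∈ V, (S v : Finset (Fin n)) ≃ Fin d) :
    ∀ y : Fin d → ℝ,
      ∑ v ∈ V.attach,
          |Matrix.det (Matrix.of fun i j : Fin d => U ((e v.1 v.2).symm i : S v.1) j)| *
            ∏ i ∈ (S v.1)ᶜ, (U i ⬝ᵥ y) = 0 := by
  classical
  intro y
  have hSmem : ∀ p (i : Fin n), i ∈ S p ↔ U i ⬝ᵥ p + z i = 0 := by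
    intro p i; rw [hS]; simp
  -- every vertex matrix is invertible
  have hdet : ∀ v : {x // x ∈ V}, (Amat U e v).det ≠ 0 := by
    intro v hc
    obtain ⟨w, hw0, hAw⟩ := (Matrix.exists_mulVec_eq_zero_iff (M := Amat U e v)).mpr hc
    apply hw0
    have hvE : (v : Fin d → ℝ) ∈ Set.extremePoints ℝ P := by
      rw [← hV]; exact Finset.mem_coe.mpr v.2
    rw [hP] at hvE
    refine vertex_span U z v.1 hvE w ?_
    intro i hi
    have hiS : i ∈ S v.1 := (hSmem v.1 i).mpr hi
    have hj := congrFun hAw (e v.1 v.2 ⟨i, hiS⟩)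
    rw [Pi.zero_apply] at hj
    have : (Amat U e v *ᵥ w) (e v.1 v.2 ⟨i, hiS⟩)
        = U (av e v (e v.1 v.2 ⟨i, hiS⟩)) ⬝ᵥ w := rfl
    rw [this, av_apply] at hj
    exact hj
  -- the defining property of w0
  have hw0spec : ∀ p : {x // x ∈ V} × Fin d,
      (Amat U e p.1) *ᵥ (w0 U e p) = Pi.single p.2 1 := by
    intro p
    unfold w0
    rw [Matrix.mulVec_mulVec, Matrix.mul_nonsing_inv _ (isUnit_iff_ne_zero.mpr (hdet p.1)),
      Matrix.one_mulVec]
  have hw0a : ∀ p : {x // x ∈ V} × Fin d, U (av e p.1 p.2) ⬝ᵥ w0 U e p = 1 := by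
    intro p
    have := congrFun (hw0spec p) p.2
    rw [Pi.single_eq_same] at this
    exact this
  have hw0T : ∀ (p : {x // x ∈ V} × Fin d) (t : Fin n), t ∈ S p.1.1 → t ≠ av e p.1 p.2 →
      U t ⬝ᵥ w0 U e p = 0 := by
    intro p t ht hta
    set j := e p.1.1 p.1.2 ⟨t, ht⟩ with hj
    have hjk : j ≠ p.2 := by
      intro h
      apply hta
      have : av e p.1 j = t := av_apply e p.1 t ht
      rw [h] at this
      exact this.symm
    have := congrFun (hw0spec p) j
    rw [Pi.single_eq_of_ne hjk] at this
    have h2 : (Amat U e p.1 *ᵥ w0 U e p) j = U (av e p.1 j) ⬝ᵥ w0 U e p := rfl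
    rw [h2, hj, av_apply] at this
    exact this
  -- case y = 0
  by_cases hy : y = 0
  · subst hy
    apply Finset.sum_eq_zero
    intro v _
    rcases Finset.eq_empty_or_nonempty ((S v.1)ᶜ) with hc | ⟨i, hi⟩
    · -- then S v.1 = univ and n = d : contradiction with boundedness
      exfalso
      have hSuniv : S v.1 = Finset.univ := by
        rwa [Finset.compl_eq_empty_iff] at hc
      -- the ray v + s • w₀ stays in P
      set p : {x // x ∈ V} × Fin d := (v, ⟨0, hd⟩) with hp
      set w₀ := w0 U e p with hw₀
      have hw₀ne : w₀ ≠ 0 := by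
        intro h
        have := hw0a p
        rw [← hw₀, h, dotProduct_zero] at this
        norm_num at this
      have hray : ∀ s : ℝ, 0 ≤ s → v.1 + s • w₀ ∈ P := by
        intro s hs
        rw [hP]
        intro i
        have hiS : i ∈ S v.1 := hSuniv ▸ Finset.mem_univ i
        have hiv : U i ⬝ᵥ v.1 + z i = 0 := (hSmem v.1 i).mp hiS
        have hdoti : U i ⬝ᵥ (v.1 + s • w₀) + z i = (U i ⬝ᵥ v.1 + z i) + s * (U i ⬝ᵥ w₀) := by
          rw [dotProduct_add, dotProduct_smul, smul_eq_mul]; ring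
        rw [hdoti, hiv]
        by_cases hia : i = av e p.1 p.2
        · rw [hia, hw0a p]; simpa using hs
        · rw [hw0T p i hiS hia]; simp
      obtain ⟨C, hC⟩ := isBounded_iff_forall_norm_le.mp hbdd
      have hw₀pos : 0 < ‖w₀‖ := norm_pos_iff.mpr hw₀ne
      set s := (C + ‖v.1‖ + 1) / ‖w₀‖ with hsdef
      have hs0 : 0 ≤ s := by
        apply div_nonneg _ (le_of_lt hw₀pos)
        have := norm_nonneg v.1
        have := hC _ (hray 0 le_rfl)
        simp at this
        nlinarith [norm_nonneg (v.1 : Fin d → ℝ)]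
      have hmem := hC _ (hray s hs0)
      have h1 : ‖s • w₀‖ ≤ C + ‖v.1‖ := by
        calc ‖s • w₀‖ = ‖(v.1 + s • w₀) - v.1‖ := by congr 1; abel
          _ ≤ ‖v.1 + s • w₀‖ + ‖v.1‖ := norm_sub_le _ _
          _ ≤ C + ‖v.1‖ := by linarith
      rw [norm_smul, Real.norm_eq_abs, abs_of_nonneg hs0, hsdef,
        div_mul_cancel₀ _ (ne_of_gt hw₀pos)] at h1
      linarith
    · -- the product contains the factor U i ⬝ᵥ 0 = 0
      rw [Finset.prod_eq_zero hi (by rw [dotProduct_zero]), mul_zero]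
  -- now y ≠ 0
  set c : Fin d → ℝ := (y ⬝ᵥ y)⁻¹ • y with hcdef
  have hyy : y ⬝ᵥ y ≠ 0 := fun h => hy (dotProduct_self_eq_zero.mp h)
  have hyc : y ⬝ᵥ c = 1 := by
    rw [hcdef, dotProduct_smul, smul_eq_mul, inv_mul_cancel₀ hyy]
  set G : {x // x ∈ V} × Fin d → ℝ := fun p =>
    sg U e p.1 * ((Amat U e p.1).updateRow p.2 c).det *
      ∏ i ∈ ((S p.1.1).erase (av e p.1 p.2))ᶜ, (U i ⬝ᵥ y) with hG
  have hprodins : ∀ (v : {x // x ∈ V}) (k : Fin d),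
      ∏ i ∈ ((S v.1).erase (av e v k))ᶜ, (U i ⬝ᵥ y)
        = (U (av e v k) ⬝ᵥ y) * ∏ i ∈ (S v.1)ᶜ, (U i ⬝ᵥ y) := by
    intro v k
    rw [Finset.compl_erase, Finset.prod_insert (by simp [av_mem])]
  have step1 : ∀ v : {x // x ∈ V},
      |(Amat U e v).det| * ∏ i ∈ (S v.1)ᶜ, (U i ⬝ᵥ y) = ∑ k : Fin d, G (v, k) := by
    intro v
    rw [abs_eq_sg_mul, det_expand (Amat U e v) y c hyc]
    rw [Finset.mul_sum, Finset.sum_mul]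
    apply Finset.sum_congr rfl
    intro k _
    rw [hG]
    show sg U e v * ((Amat U e v k ⬝ᵥ y) * ((Amat U e v).updateRow k c).det)
        * ∏ i ∈ (S v.1)ᶜ, (U i ⬝ᵥ y)
      = sg U e v * ((Amat U e v).updateRow k c).det
        * ∏ i ∈ ((S v.1).erase (av e v k))ᶜ, (U i ⬝ᵥ y)
    rw [hprodins v k, Amat_row]
    ring
  -- the pairing
  have exq : ∀ p : {x // x ∈ V} × Fin d, ∃ q : {x // x ∈ V} × Fin d,
      q.1.1 ≠ p.1.1 ∧ av e q.1 q.2 ∉ S p.1.1 ∧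
      S q.1.1 = insert (av e q.1 q.2) ((S p.1.1).erase (av e p.1 p.2)) ∧
      U (av e q.1 q.2) ⬝ᵥ (w0 U e p) < 0 ∧
      (∀ u ∈ V, u ≠ p.1.1 → (S p.1.1).erase (av e p.1 p.2) ⊆ S u → u = q.1.1) := by
    intro p
    obtain ⟨v', b, hv'V, hv'ne, hbS, hSv', hUb, huniq⟩ :=
      edge_lemma U z P hP hbdd V hV S hS hsimple p.1.1 p.1.2 (av e p.1 p.2)
        (av_mem e p.1 p.2) (w0 U e p) (hw0a p) (fun t ht hta => hw0T p t ht hta)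
    have hb' : b ∈ S v' := by rw [hSv']; exact Finset.mem_insert_self _ _
    refine ⟨(⟨v', hv'V⟩, e v' hv'V ⟨b, hb'⟩), ?_, ?_, ?_, ?_, ?_⟩ <;>
      simp only [av_apply]
    · exact hv'ne
    · exact hbS
    · exact hSv'
    · exact hUb
    · exact huniq
  set ι : {x // x ∈ V} × Fin d → {x // x ∈ V} × Fin d :=
    fun p => Classical.choose (exq p) with hι
  have spec : ∀ p, (ι p).1.1 ≠ p.1.1 ∧ av e (ι p).1 (ι p).2 ∉ S p.1.1 ∧
      S (ι p).1.1 = insert (av e (ι p).1 (ι p).2) ((S p.1.1).erase (av e p.1 p.2)) ∧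
      U (av e (ι p).1 (ι p).2) ⬝ᵥ (w0 U e p) < 0 ∧
      (∀ u ∈ V, u ≠ p.1.1 → (S p.1.1).erase (av e p.1 p.2) ⊆ S u → u = (ι p).1.1) :=
    fun p => Classical.choose_spec (exq p)
  -- basic facts about the pairing
  have hT_eq : ∀ p, (S (ι p).1.1).erase (av e (ι p).1 (ι p).2)
      = (S p.1.1).erase (av e p.1 p.2) := by
    intro p
    obtain ⟨h1, h2, h3, h4, h5⟩ := spec p
    rw [h3, Finset.erase_insert]
    intro hmem
    exact h2 (Finset.mem_of_mem_erase hmem)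
  have hι_inv : ∀ p, ι (ι p) = p := by
    intro p
    obtain ⟨h1, h2, h3, h4, h5⟩ := spec p
    obtain ⟨g1, g2, g3, g4, g5⟩ := spec (ι p)
    -- first components agree
    have hfst : p.1.1 = (ι (ι p)).1.1 := by
      apply g5 p.1.1 p.1.2 (Ne.symm h1)
      rw [hT_eq p]
      exact Finset.erase_subset _ _
    -- the new facet of ι (ι p) is the facet dropped at p
    have havmem : av e (ι (ι p)).1 (ι (ι p)).2 ∈ S p.1.1 := by
      rw [hfst]; exact av_mem _ _ _
    have havT : av e (ι (ι p)).1 (ι (ι p)).2 ∉ (S p.1.1).erase (av e p.1 p.2) := by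
      rw [← hT_eq p]
      intro hmem
      exact g2 (Finset.mem_of_mem_erase hmem)
    have hav_eq : av e (ι (ι p)).1 (ι (ι p)).2 = av e p.1 p.2 := by
      by_contra hne
      exact havT (Finset.mem_erase.mpr ⟨hne, havmem⟩)
    -- assemble
    have hfst' : (ι (ι p)).1 = p.1 := Subtype.ext hfst.symm
    have h2nd : av e p.1 (ι (ι p)).2 = av e p.1 p.2 := by rw [← hav_eq, hfst']
    exact Prod.ext hfst' (av_inj e p.1 h2nd)
  have hι_ne : ∀ p, ι p ≠ p := by
    intro p hcontra
    exact (spec p).1 (by rw [hcontra])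
  -- the cancellation
  have hcancel : ∀ p, G p + G (ι p) = 0 := by
    intro p
    obtain ⟨h1, h2, h3, h4, _⟩ := spec p
    have hap : av e p.1 p.2 ∈ S p.1.1 := av_mem e p.1 p.2
    have hbq : av e (ι p).1 (ι p).2 ∈ S (ι p).1.1 := av_mem e (ι p).1 (ι p).2
    have hba : av e (ι p).1 (ι p).2 ≠ av e p.1 p.2 := fun h => h2 (h ▸ hap)
    have haq : av e p.1 p.2 ∉ S (ι p).1.1 := by
      rw [h3]
      intro hmem
      rcases Finset.mem_insert.mp hmem with h | h
      · exact hba h.symm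
      · exact (Finset.mem_erase.mp h).1 rfl
    have hmemq : ∀ x : Fin n, x ∈ S (ι p).1.1 → x ≠ av e (ι p).1 (ι p).2 →
        x ∈ (S p.1.1).erase (av e p.1 p.2) := by
      intro x hx hxb
      rw [h3] at hx
      exact (Finset.mem_insert.mp hx).resolve_left hxb
    have hmemp : ∀ x : Fin n, x ∈ S p.1.1 → x ≠ av e p.1 p.2 → x ∈ S (ι p).1.1 := by
      intro x hx hxa
      rw [h3]
      exact Finset.mem_insert_of_mem (Finset.mem_erase.mpr ⟨hxa, hx⟩)
    -- the permutation matching the two vertex matrices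
    set τ : {x // x ∈ S (ι p).1.1} ≃ {x // x ∈ S p.1.1} :=
      { toFun := fun x => if h : (x : Fin n) = av e (ι p).1 (ι p).2 then ⟨av e p.1 p.2, hap⟩
          else ⟨x, Finset.mem_of_mem_erase (hmemq x x.2 h)⟩
        invFun := fun y => if h : (y : Fin n) = av e p.1 p.2 then ⟨av e (ι p).1 (ι p).2, hbq⟩
          else ⟨y, hmemp y y.2 h⟩
        left_inv := by
          intro x
          by_cases h : (x : Fin n) = av e (ι p).1 (ι p).2
          · simp only [dif_pos h]
            rw [dif_pos trivial]
            exact Subtype.ext h.symm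
          · simp only [dif_neg h]
            have hxa : (x : Fin n) ≠ av e p.1 p.2 := fun hh => haq (hh ▸ x.2)
            rw [dif_neg hxa]
        right_inv := by
          intro y
          by_cases h : (y : Fin n) = av e p.1 p.2
          · simp only [dif_pos h]
            rw [dif_pos trivial]
            exact Subtype.ext h.symm
          · simp only [dif_neg h]
            have hyb : (y : Fin n) ≠ av e (ι p).1 (ι p).2 := fun hh => h2 (hh ▸ y.2)
            rw [dif_neg hyb] } with hτ
    set ρ : Fin d ≃ Fin d :=
      ((e (ι p).1.1 (ι p).1.2).symm.trans τ).trans (e p.1.1 p.1.2) with hρ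
    have hρq : ρ (ι p).2 = p.2 := by
      show e p.1.1 p.1.2 (τ ((e (ι p).1.1 (ι p).1.2).symm (ι p).2)) = p.2
      rw [av_symm e (ι p).1 (ι p).2]
      have hτb : τ ⟨av e (ι p).1 (ι p).2, av_mem e (ι p).1 (ι p).2⟩
          = ⟨av e p.1 p.2, hap⟩ := by
        rw [hτ]; exact dif_pos rfl
      rw [hτb]
      have h5 := (e p.1.1 p.1.2).apply_symm_apply p.2
      rw [av_symm e p.1 p.2] at h5
      exact h5
    have hρj : ∀ j : Fin d, j ≠ (ι p).2 →
        ρ j ≠ p.2 ∧ Amat U e p.1 (ρ j) = U (av e (ι p).1 j) := by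
      intro j hj
      have htb : av e (ι p).1 j ≠ av e (ι p).1 (ι p).2 :=
        fun h => hj (av_inj e (ι p).1 h)
      have htmem : av e (ι p).1 j ∈ (S p.1.1).erase (av e p.1 p.2) :=
        hmemq _ (av_mem e (ι p).1 j) htb
      have hρval : ρ j = e p.1.1 p.1.2 ⟨av e (ι p).1 j, Finset.mem_of_mem_erase htmem⟩ := by
        show e p.1.1 p.1.2 (τ ((e (ι p).1.1 (ι p).1.2).symm j)) = _
        congr 1
        rw [av_symm e (ι p).1 j, hτ]
        exact dif_neg htb
      constructor
      · rw [hρval]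
        intro hcontra
        have h6 := congrArg (e p.1.1 p.1.2).symm hcontra
        rw [Equiv.symm_apply_apply, av_symm e p.1 p.2] at h6
        have h7 : av e (ι p).1 j = av e p.1 p.2 := congrArg Subtype.val h6
        exact (Finset.mem_erase.mp htmem).1 h7
      · rw [hρval, Amat_row, av_apply]
    -- matrix identities
    have hM1 : Amat U e (ι p).1
        = ((Amat U e p.1).updateRow p.2 (U (av e (ι p).1 (ι p).2))).submatrix ρ id := by
      ext j i
      show Amat U e (ι p).1 j i
        = ((Amat U e p.1).updateRow p.2 (U (av e (ι p).1 (ι p).2))) (ρ j) i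
      by_cases hj : j = (ι p).2
      · subst hj
        rw [hρq, Matrix.updateRow_self, Amat_row]
      · obtain ⟨hne, hrow⟩ := hρj j hj
        rw [Matrix.updateRow_ne hne, hrow, Amat_row]
    have hM2 : (Amat U e (ι p).1).updateRow (ι p).2 c
        = ((Amat U e p.1).updateRow p.2 c).submatrix ρ id := by
      ext j i
      show ((Amat U e (ι p).1).updateRow (ι p).2 c) j i
        = ((Amat U e p.1).updateRow p.2 c) (ρ j) i
      by_cases hj : j = (ι p).2
      · subst hj
        rw [hρq, Matrix.updateRow_self, Matrix.updateRow_self]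
      · obtain ⟨hne, hrow⟩ := hρj j hj
        rw [Matrix.updateRow_ne hne, Matrix.updateRow_ne hj, hrow, Amat_row]
    -- determinant relations
    have hDq := Matrix.det_permute ρ ((Amat U e p.1).updateRow p.2 (U (av e (ι p).1 (ι p).2)))
    rw [← hM1] at hDq
    have hD1' := Matrix.det_permute ρ ((Amat U e p.1).updateRow p.2 c)
    rw [← hM2] at hD1'
    -- the sign flip
    have hDb : ((Amat U e p.1).updateRow p.2 (U (av e (ι p).1 (ι p).2))).det
        * (Amat U e p.1).det < 0 := by
      apply det_update_sign (Amat U e p.1) p.2 (w0 U e p) _ (hdet p.1)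
      · intro j hj
        have h8 := congrFun (hw0spec p) j
        rw [Pi.single_eq_of_ne hj] at h8
        exact h8
      · have h8 := congrFun (hw0spec p) p.2
        rw [Pi.single_eq_same] at h8
        rw [show Amat U e p.1 p.2 ⬝ᵥ w0 U e p = (Amat U e p.1 *ᵥ w0 U e p) p.2 from rfl, h8]
        norm_num
      · exact h4
    -- the sign of the permutation
    obtain hσ | hσ := Int.units_eq_one_or (Equiv.Perm.sign ρ)
    all_goals (
      rw [hσ] at hDq hD1'
      simp only [Units.val_one, Int.cast_one, Units.val_neg, Int.cast_neg, one_mul, neg_mul,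
        neg_neg] at hDq hD1'
    )
    -- case sign ρ = 1
    · have hkey : sg U e p.1 + sg U e (ι p).1 = 0 := by
        unfold sg
        rcases (hdet p.1).lt_or_gt with hv | hv
        · have hb1 : 0 < ((Amat U e p.1).updateRow p.2 (U (av e (ι p).1 (ι p).2))).det := by
            nlinarith
          rw [if_pos hv, if_neg (by rw [hDq]; linarith)]
          ring
        · have hb1 : ((Amat U e p.1).updateRow p.2 (U (av e (ι p).1 (ι p).2))).det < 0 := by
            nlinarith
          rw [if_neg (by linarith), if_pos (by rw [hDq]; linarith)]
          ring
      show sg U e p.1 * ((Amat U e p.1).updateRow p.2 c).det *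
            ∏ i ∈ ((S p.1.1).erase (av e p.1 p.2))ᶜ, (U i ⬝ᵥ y)
          + sg U e (ι p).1 * ((Amat U e (ι p).1).updateRow (ι p).2 c).det *
            ∏ i ∈ ((S (ι p).1.1).erase (av e (ι p).1 (ι p).2))ᶜ, (U i ⬝ᵥ y) = 0
      rw [hT_eq p, hD1']
      have : sg U e p.1 * ((Amat U e p.1).updateRow p.2 c).det *
            ∏ i ∈ ((S p.1.1).erase (av e p.1 p.2))ᶜ, (U i ⬝ᵥ y)
          + sg U e (ι p).1 * ((Amat U e p.1).updateRow p.2 c).det *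
            ∏ i ∈ ((S p.1.1).erase (av e p.1 p.2))ᶜ, (U i ⬝ᵥ y)
          = (sg U e p.1 + sg U e (ι p).1) * (((Amat U e p.1).updateRow p.2 c).det *
            ∏ i ∈ ((S p.1.1).erase (av e p.1 p.2))ᶜ, (U i ⬝ᵥ y)) := by ring
      rw [this, hkey, zero_mul]
    -- case sign ρ = -1
    · have hkey : sg U e p.1 - sg U e (ι p).1 = 0 := by
        unfold sg
        rcases (hdet p.1).lt_or_gt with hv | hv
        · have hb1 : 0 < ((Amat U e p.1).updateRow p.2 (U (av e (ι p).1 (ι p).2))).det := by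
            nlinarith
          rw [if_pos hv, if_pos (by rw [hDq]; linarith)]
          ring
        · have hb1 : ((Amat U e p.1).updateRow p.2 (U (av e (ι p).1 (ι p).2))).det < 0 := by
            nlinarith
          rw [if_neg (by linarith), if_neg (by rw [hDq]; linarith)]
          ring
      show sg U e p.1 * ((Amat U e p.1).updateRow p.2 c).det *
            ∏ i ∈ ((S p.1.1).erase (av e p.1 p.2))ᶜ, (U i ⬝ᵥ y)
          + sg U e (ι p).1 * ((Amat U e (ι p).1).updateRow (ι p).2 c).det *
            ∏ i ∈ ((S (ι p).1.1).erase (av e (ι p).1 (ι p).2))ᶜ, (U i ⬝ᵥ y) = 0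
      rw [hT_eq p, hD1']
      have : sg U e p.1 * ((Amat U e p.1).updateRow p.2 c).det *
            ∏ i ∈ ((S p.1.1).erase (av e p.1 p.2))ᶜ, (U i ⬝ᵥ y)
          + sg U e (ι p).1 * -((Amat U e p.1).updateRow p.2 c).det *
            ∏ i ∈ ((S p.1.1).erase (av e p.1 p.2))ᶜ, (U i ⬝ᵥ y)
          = (sg U e p.1 - sg U e (ι p).1) * (((Amat U e p.1).updateRow p.2 c).det *
            ∏ i ∈ ((S p.1.1).erase (av e p.1 p.2))ᶜ, (U i ⬝ᵥ y)) := by ring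
      rw [this, hkey, zero_mul]
  calc ∑ v ∈ V.attach,
        |Matrix.det (Matrix.of fun i j : Fin d => U ((e v.1 v.2).symm i : S v.1) j)| *
          ∏ i ∈ (S v.1)ᶜ, (U i ⬝ᵥ y)
      = ∑ v ∈ V.attach, ∑ k : Fin d, G (v, k) :=
        Finset.sum_congr rfl (fun v _ => step1 v)
    _ = ∑ p ∈ V.attach ×ˢ (univ : Finset (Fin d)), G p := by
        rw [Finset.sum_product]
    _ = 0 := by
        apply Finset.sum_ninvolution ι hcancel (fun p _ => hι_ne p)
          (fun p => by simp [Finset.mem_product]) hι_inv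

end main
end
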